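/- The embedding of PRED2₀ into I₀ is sound: if Δ ⊢ φ in PRED2₀ (Δ a set of formulas, φ a formula) then ⟦Δ⟧ ∪ Γ(Δ ∪ {φ}) ⊢ ⟦φ⟧ in I₀. -/

import Mathlib

/-! Infrastructure: type-free λ-terms over a set of constants, βη-conversion,
and the illative systems Iω, Iω^c and I₀ of Barendregt–Bunder–Dekkers style,
following Czajka, "A semantic approach to illative combinatory logic". -/

namespace ICL

/-- Type-free λ-terms over a set `C` of primitive constants (de Bruijn representation). -/
inductive Tm (C : Type) : Type
  | var : Nat → Tm C
  | const : C → Tm C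
  | app : Tm C → Tm C → Tm C
  | lam : Tm C → Tm C

namespace Tm

variable {C : Type}

/-- Renaming of free de Bruijn variables. -/
def rename (f : Nat → Nat) : Tm C → Tm C
  | .var n => .var (f n)
  | .const c => .const c
  | .app a b => .app (a.rename f) (b.rename f)
  | .lam a => .lam (a.rename fun n => match n with | 0 => 0 | m + 1 => f m + 1)

/-- Shift all free variables up by one. -/
def lift (t : Tm C) : Tm C := t.rename (· + 1)

/-- Simultaneous (capture-avoiding) substitution. -/
def bind (σ : Nat → Tm C) : Tm C → Tm C
  | .var n => σ n
  | .const c => .const c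
  | .app a b => .app (a.bind σ) (b.bind σ)
  | .lam a => .lam (a.bind fun n => match n with | 0 => .var 0 | m + 1 => (σ m).lift)

/-- Substitution of `s` for the variable `0` (β-contraction of `(λ.t) s`). -/
def subst0 (t s : Tm C) : Tm C := t.bind fun n => match n with | 0 => s | m + 1 => .var m

/-- The set of free variables of a term. -/
def fvar : Tm C → Set Nat
  | .var n => {n}
  | .const _ => ∅
  | .app a b => fvar a ∪ fvar b
  | .lam a => {n | n + 1 ∈ fvar a}

end Tm

/-- One-step βη-reduction (closed under arbitrary contexts). -/
inductive BetaEta {C : Type} : Tm C → Tm C → Prop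
  | beta (t s : Tm C) : BetaEta (.app (.lam t) s) (t.subst0 s)
  | eta (t : Tm C) : BetaEta (.lam (.app t.lift (.var 0))) t
  | appL {t t' : Tm C} (s : Tm C) : BetaEta t t' → BetaEta (.app t s) (.app t' s)
  | appR (t : Tm C) {s s' : Tm C} : BetaEta s s' → BetaEta (.app t s) (.app t s')
  | lam {t t' : Tm C} : BetaEta t t' → BetaEta (.lam t) (.lam t')

/-- βη-convertibility `=βη`. -/
def Conv {C : Type} : Tm C → Tm C → Prop := Relation.EqvGen BetaEta

/-- The term `Ξ`. -/
def XiT {C : Type} (cXi : C) : Tm C := .const cXi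

/-- The term `L`. -/
def LT {C : Type} (cL : C) : Tm C := .const cL

/-- The term `H = λx. L (K x) = λx. L (λy. x)`. -/
def Hc {C : Type} (cL : C) : Tm C := .lam (.app (.const cL) (.lam (.var 1)))

/-- The term `⊃ = λx y. Ξ (K x) (K y)`. -/
def impC {C : Type} (cXi : C) : Tm C :=
  .lam (.lam (.app (.app (.const cXi) (.lam (.var 2))) (.lam (.var 1))))

/-- `t₁ ⊃ t₂` (infix application of `⊃`). -/
def impTm {C : Type} (cXi : C) (t1 t2 : Tm C) : Tm C := .app (.app (impC cXi) t1) t2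

/-- The term `F = λx y f. Ξ x (λz. y (f z))`. -/
def Fcomb {C : Type} (cXi : C) : Tm C :=
  .lam (.lam (.lam (.app (.app (.const cXi) (.var 2))
    (.lam (.app (.var 2) (.app (.var 1) (.var 0)))))))

/-- The term `⊥ = Ξ H I`, where `I = λx.x`. -/
def botT {C : Type} (cXi cL : C) : Tm C := .app (.app (XiT cXi) (Hc cL)) (.lam (.var 0))

/-- The double-negation axiom term `Ξ H (λx. ((x ⊃ ⊥) ⊃ ⊥) ⊃ x)`. -/
def dnAx {C : Type} (cXi cL : C) : Tm C :=
  .app (.app (XiT cXi) (Hc cL))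
    (.lam (impTm cXi (impTm cXi (impTm cXi (.var 0) (botT cXi cL)) (botT cXi cL)) (.var 0)))

/-- Free variables of a set of terms. -/
def fvS {C : Type} (Γ : Set (Tm C)) : Set Nat := ⋃ t ∈ Γ, t.fvar

/-- The illative derivability judgement `Γ ⊢ t`.  The flag `fl` enables the rule `F_L`
(giving `Iω` when `fl = true`, and `I₀` when `fl = false`); the flag `dn` enables the
double-negation axiom (giving the classical variant `Iω^c`). -/
inductive IDeriv {B C : Type} (cXi cL : C) (cA : B → C) (fl dn : Bool) :
    Set (Tm C) → Tm C → Prop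
  | ax {Γ : Set (Tm C)} {t : Tm C} : t ∈ Γ → IDeriv cXi cL cA fl dn Γ t
  | axLH {Γ : Set (Tm C)} : IDeriv cXi cL cA fl dn Γ (.app (LT cL) (Hc cL))
  | axLA {Γ : Set (Tm C)} (b : B) : IDeriv cXi cL cA fl dn Γ (.app (LT cL) (.const (cA b)))
  | axDN {Γ : Set (Tm C)} : dn = true → IDeriv cXi cL cA fl dn Γ (dnAx cXi cL)
  | eq {Γ : Set (Tm C)} {t1 t2 : Tm C} :
      IDeriv cXi cL cA fl dn Γ t1 → Conv t1 t2 → IDeriv cXi cL cA fl dn Γ t2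
  | hi {Γ : Set (Tm C)} {t : Tm C} :
      IDeriv cXi cL cA fl dn Γ t → IDeriv cXi cL cA fl dn Γ (.app (Hc cL) t)
  | xiE {Γ : Set (Tm C)} {t1 t2 t3 : Tm C} :
      IDeriv cXi cL cA fl dn Γ (.app (.app (XiT cXi) t1) t2) →
      IDeriv cXi cL cA fl dn Γ (.app t1 t3) →
      IDeriv cXi cL cA fl dn Γ (.app t2 t3)
  | xiI {Γ : Set (Tm C)} {t1 t2 : Tm C} (x : Nat) :
      IDeriv cXi cL cA fl dn (insert (.app t1 (.var x)) Γ) (.app t2 (.var x)) →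
      IDeriv cXi cL cA fl dn Γ (.app (LT cL) t1) →
      x ∉ fvS Γ → x ∉ t1.fvar → x ∉ t2.fvar →
      IDeriv cXi cL cA fl dn Γ (.app (.app (XiT cXi) t1) t2)
  | xiH {Γ : Set (Tm C)} {t1 t2 : Tm C} (x : Nat) :
      IDeriv cXi cL cA fl dn (insert (.app t1 (.var x)) Γ) (.app (Hc cL) (.app t2 (.var x))) →
      IDeriv cXi cL cA fl dn Γ (.app (LT cL) t1) →
      x ∉ fvS Γ → x ∉ t1.fvar → x ∉ t2.fvar →
      IDeriv cXi cL cA fl dn Γ (.app (Hc cL) (.app (.app (XiT cXi) t1) t2))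
  | fL {Γ : Set (Tm C)} {t1 t2 : Tm C} (x : Nat) : fl = true →
      IDeriv cXi cL cA fl dn (insert (.app t1 (.var x)) Γ) (.app (LT cL) t2) →
      IDeriv cXi cL cA fl dn Γ (.app (LT cL) t1) →
      x ∉ fvS Γ → x ∉ t1.fvar → x ∉ t2.fvar →
      IDeriv cXi cL cA fl dn Γ (.app (.app (Fcomb cXi) t1) t2)

end ICL


/-! Infrastructure: the system PRED2₀ of first-order many-sorted intuitionistic
predicate logic with second-order propositional quantifiers, and its (simplified)
Kripke semantics, following Czajka, "A semantic approach to illative combinatory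
logic", Section 2. -/

namespace PRED2

/-- Types of PRED2₀ : `τ ::= o | B | B → τ`, for a set `B` of base types. -/
inductive Ty (B : Type) : Type
  | o : Ty B
  | base : B → Ty B
  | arr : B → Ty B → Ty B
deriving DecidableEq

/-- The types over which quantification is allowed: `B ∪ {o}`. -/
def QTy {B : Type} (τ : Ty B) : Prop := τ = .o ∨ ∃ b, τ = .base b

/-- Terms of PRED2₀ over a signature `Con` (with `Con τ` the constants of type `τ`).
Variables of type `τ` are indexed by natural numbers.  Terms of type `.o` are the
formulas. -/
inductive Trm (B : Type) (Con : Ty B → Type) : Ty B → Type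
  | var (τ : Ty B) (n : Nat) : Trm B Con τ
  | con {τ : Ty B} (c : Con τ) : Trm B Con τ
  | app {b : B} {τ : Ty B} (f : Trm B Con (.arr b τ)) (a : Trm B Con (.base b)) : Trm B Con τ
  | imp (φ ψ : Trm B Con .o) : Trm B Con .o
  | all (τ : Ty B) (hτ : QTy τ) (m : Nat) (φ : Trm B Con .o) : Trm B Con .o

variable {B : Type} [DecidableEq B] {Con : Ty B → Type}

/-- Free variables of a term (a variable is a pair of its type and its index). -/
def FV : {τ : Ty B} → Trm B Con τ → Finset (Ty B × Nat)
  | _, .var τ n => {(τ, n)}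
  | _, .con _ => ∅
  | _, .app f a => FV f ∪ FV a
  | _, .imp φ ψ => FV φ ∪ FV ψ
  | _, .all τ _ m φ => (FV φ).erase (τ, m)

/-- Update a (term-valued) valuation at the variable `(τ0, m)`. -/
def vupd (v : ∀ τ : Ty B, Nat → Trm B Con τ) (τ0 : Ty B) (m : Nat) (t : Trm B Con τ0) :
    ∀ τ : Ty B, Nat → Trm B Con τ :=
  fun τ n => if h : τ = τ0 then (if n = m then h.symm ▸ t else v τ n) else v τ n

/-- The identity substitution. -/
def vid : ∀ τ : Ty B, Nat → Trm B Con τ := fun τ n => .var τ n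

/-- A number strictly larger than the index of any variable free in any `v y`
for `y ∈ s`; used to choose fresh names for bound variables. -/
def fresh (v : ∀ τ : Ty B, Nat → Trm B Con τ) (s : Finset (Ty B × Nat)) : Nat :=
  (s.sup fun y => (FV (v y.1 y.2)).sup fun z => z.2) + 1

/-- Simultaneous capture-avoiding substitution: bound variables are renamed to
fresh ones so that no free variable of the substituted terms is captured. -/
def substV (v : ∀ τ : Ty B, Nat → Trm B Con τ) : {τ : Ty B} → Trm B Con τ → Trm B Con τ
  | _, .var τ n => v τ n
  | _, .con c => .con c
  | _, .app f a => .app (substV v f) (substV v a)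
  | _, .imp φ ψ => .imp (substV v φ) (substV v ψ)
  | _, .all τ h m φ =>
      let m' := fresh v ((FV φ).erase (τ, m))
      .all τ h m' (substV (vupd v τ m (.var τ m')) φ)

/-- `φ[x/t]` : capture-avoiding substitution of the term `t` for all free
occurrences of the variable `x = (τ, m)`. -/
def subst1 (τ : Ty B) (m : Nat) (t : Trm B Con τ) {τ' : Ty B} (φ : Trm B Con τ') :
    Trm B Con τ' :=
  substV (vupd vid τ m t) φ

/-- Derivability in PRED2₀ (for a set `Δ` of hypotheses; the rules are the axiom,
`⊃`-introduction and elimination, and `∀`-introduction and elimination). -/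
inductive Deriv : Set (Trm B Con .o) → Trm B Con .o → Prop
  | ax {Δ : Set (Trm B Con .o)} {φ} : φ ∈ Δ → Deriv Δ φ
  | impI {Δ : Set (Trm B Con .o)} {φ ψ} : Deriv (insert φ Δ) ψ → Deriv Δ (.imp φ ψ)
  | impE {Δ : Set (Trm B Con .o)} {φ ψ} : Deriv Δ (.imp φ ψ) → Deriv Δ φ → Deriv Δ ψ
  | allI {Δ : Set (Trm B Con .o)} (τ : Ty B) (hτ : QTy τ) (m : Nat) {φ} :
      Deriv Δ φ → (∀ ψ ∈ Δ, (τ, m) ∉ FV ψ) → Deriv Δ (.all τ hτ m φ)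
  | allE {Δ : Set (Trm B Con .o)} {τ : Ty B} {hτ : QTy τ} {m : Nat} {φ} (t : Trm B Con τ) :
      Deriv Δ (.all τ hτ m φ) → Deriv Δ (subst1 τ m t φ)

/-- `Δ ⊢ φ` for an arbitrary set `Δ`: some finite subset of `Δ` derives `φ`. -/
def DerivFrom (Δ : Set (Trm B Con .o)) (φ : Trm B Con .o) : Prop :=
  ∃ Δ' ⊆ Δ, Δ'.Finite ∧ Deriv Δ' φ

end PRED2

namespace Embed

open ICL PRED2

/-- The primitive constants of the illative system `I₀` used for the embedding:
`Ξ`, `L`, `A_τ` for base types `τ`, and a constant for every constant of the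
PRED2₀ signature. -/
inductive SCon (B : Type) (Con : PRED2.Ty B → Type) : Type
  | Xi : SCon B Con
  | L : SCon B Con
  | A : B → SCon B Con
  | sig : {τ : PRED2.Ty B} → Con τ → SCon B Con

variable {B : Type} [DecidableEq B] {Con : PRED2.Ty B → Type}

/-- `F t₁ t₂`, written out according to the notational convention:
`λf. Ξ t₁ (λx. t₂ (f x))` if `t₂` is not a λ-abstraction, and
`λf. Ξ t₁ (λx. q₂[z/(f x)])` if `t₂ = λz. q₂`. -/
def Ft {C : Type} (cXi : C) (t1 t2 : Tm C) : Tm C :=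
  .lam (.app (.app (.const cXi) t1.lift)
    (match t2 with
     | .lam b => .lam (b.bind fun n => match n with
         | 0 => .app (.var 1) (.var 0)
         | m + 1 => .var (m + 2))
     | t2 => .lam (.app t2.lift.lift (.app (.var 1) (.var 0)))))

/-- `A_τ` : `A_o = H`, `A_τ` a constant for `τ ∈ B`, and `A_{τ₁→τ₂} = F A_{τ₁} A_{τ₂}`. -/
def Atm : PRED2.Ty B → Tm (SCon B Con)
  | .o => Hc SCon.L
  | .base b => .const (SCon.A b)
  | .arr b τ => Ft SCon.Xi (.const (SCon.A b)) (Atm τ)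

/-- The translation `⟦-⟧` from terms of PRED2₀ to λ-terms of `I₀`.  The argument
`env` assigns de Bruijn indices to the (named) free variables of PRED2₀. -/
def tr (env : PRED2.Ty B × Nat → Nat) :
    {τ : PRED2.Ty B} → Trm B Con τ → Tm (SCon B Con)
  | _, .var τ n => .var (env (τ, n))
  | _, .con c => .const (SCon.sig c)
  | _, .app f a => .app (tr env f) (tr env a)
  | _, .imp φ ψ => impTm SCon.Xi (tr env φ) (tr env ψ)
  | _, .all τ _ m φ =>
      .app (.app (XiT (SCon.Xi : SCon B Con)) (Atm τ))
        (.lam (tr (fun y => if y = (τ, m) then 0 else env y + 1) φ))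

/-- The context `Γ(Δ)` associated to a set `Δ` of formulas: it consists of
`A_τ x` for every free variable `x` of `Δ` of type `τ`, `A_τ c` for every
constant `c` of type `τ` of the signature, `L A_τ` for every base type `τ`,
and `A_τ y` for every base type `τ` and the chosen variable `y = yc τ`
(which is intended to be fresh for `Δ`). -/
def GammaSet (env : PRED2.Ty B × Nat → Nat) (Δ : Set (Trm B Con .o)) (yc : B → Nat) :
    Set (Tm (SCon B Con)) :=
  {t | ∃ (τ : PRED2.Ty B) (x : Nat), (∃ φ ∈ Δ, (τ, x) ∈ FV φ) ∧
        t = .app (Atm τ) (.var (env (τ, x)))} ∪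
  {t | ∃ (τ : PRED2.Ty B) (c : Con τ), t = .app (Atm τ) (.const (SCon.sig c))} ∪
  {t | ∃ b : B, t = .app (LT (SCon.L : SCon B Con)) (.const (SCon.A b))} ∪
  {t | ∃ b : B, t = .app (Atm (PRED2.Ty.base b)) (.var (env (PRED2.Ty.base b, yc b)))}

/-- Derivability in `I₀` from an arbitrary set of hypotheses. -/
def IDerivFrom (Γ : Set (Tm (SCon B Con))) (t : Tm (SCon B Con)) : Prop :=
  ∃ Γ' ⊆ Γ, Γ'.Finite ∧ IDeriv (SCon.Xi : SCon B Con) SCon.L SCon.A false false Γ' t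



end Embed

/-! ### Auxiliary development for the soundness proof -/

namespace ICL
namespace Tm

variable {C : Type}

/-- Lifted renaming. -/
def shiftF (f : Nat → Nat) : Nat → Nat := fun n => match n with | 0 => 0 | m + 1 => f m + 1

/-- Lifted substitution. -/
def upS (σ : Nat → Tm C) : Nat → Tm C :=
  fun n => match n with | 0 => .var 0 | m + 1 => (σ m).lift

@[simp] lemma rename_var (f : Nat → Nat) (n : Nat) : (Tm.var (C := C) n).rename f = .var (f n) := rfl
@[simp] lemma rename_const (f : Nat → Nat) (c : C) : (Tm.const c).rename f = .const c := rfl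
@[simp] lemma rename_app (f : Nat → Nat) (a b : Tm C) :
    (Tm.app a b).rename f = .app (a.rename f) (b.rename f) := rfl
@[simp] lemma rename_lam (f : Nat → Nat) (a : Tm C) :
    (Tm.lam a).rename f = .lam (a.rename (shiftF f)) := rfl

@[simp] lemma bind_var (σ : Nat → Tm C) (n : Nat) : (Tm.var n).bind σ = σ n := rfl
@[simp] lemma bind_const (σ : Nat → Tm C) (c : C) : (Tm.const c).bind σ = .const c := rfl
@[simp] lemma bind_app (σ : Nat → Tm C) (a b : Tm C) :
    (Tm.app a b).bind σ = .app (a.bind σ) (b.bind σ) := rfl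
@[simp] lemma bind_lam (σ : Nat → Tm C) (a : Tm C) :
    (Tm.lam a).bind σ = .lam (a.bind (upS σ)) := rfl

@[simp] lemma shiftF_zero (f : Nat → Nat) : shiftF f 0 = 0 := rfl
@[simp] lemma shiftF_succ (f : Nat → Nat) (m : Nat) : shiftF f (m + 1) = f m + 1 := rfl
@[simp] lemma upS_zero (σ : Nat → Tm C) : upS σ 0 = .var 0 := rfl
@[simp] lemma upS_succ (σ : Nat → Tm C) (m : Nat) : upS σ (m + 1) = (σ m).lift := rfl

lemma rename_rename (f g : Nat → Nat) (t : Tm C) :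
    (t.rename f).rename g = t.rename (g ∘ f) := by
  induction t generalizing f g with
  | var n => rfl
  | const c => rfl
  | app a b iha ihb => simp [iha, ihb]
  | lam a ih =>
      simp only [rename_lam, ih]
      have h : shiftF g ∘ shiftF f = shiftF (g ∘ f) := by
        funext n; cases n <;> simp [shiftF]
      rw [h]

lemma rename_congr {f g : Nat → Nat} {t : Tm C} (h : ∀ n ∈ t.fvar, f n = g n) :
    t.rename f = t.rename g := by
  induction t generalizing f g with
  | var n => simp [h n (by simp [Tm.fvar])]
  | const c => rfl
  | app a b iha ihb =>
      simp only [rename_app]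
      rw [iha (fun n hn => h n (Or.inl hn)), ihb (fun n hn => h n (Or.inr hn))]
  | lam a ih =>
      simp only [rename_lam]
      rw [ih]
      intro n hn
      cases n with
      | zero => rfl
      | succ m => simp [shiftF, h m hn]

lemma rename_id (t : Tm C) : t.rename id = t := by
  induction t with
  | var n => rfl
  | const c => rfl
  | app a b iha ihb => simp [iha, ihb]
  | lam a ih =>
      simp only [rename_lam]
      rw [rename_congr (g := id) (fun n _ => by cases n <;> simp [shiftF]), ih]

lemma bind_rename (σ : Nat → Tm C) (f : Nat → Nat) (t : Tm C) :
    (t.rename f).bind σ = t.bind (σ ∘ f) := by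
  induction t generalizing σ f with
  | var n => rfl
  | const c => rfl
  | app a b iha ihb => simp [iha, ihb]
  | lam a ih =>
      simp only [rename_lam, bind_lam, ih]
      have h : upS σ ∘ shiftF f = upS (σ ∘ f) := by
        funext n; cases n <;> simp [shiftF, upS]
      rw [h]

lemma rename_bind (f : Nat → Nat) (σ : Nat → Tm C) (t : Tm C) :
    (t.bind σ).rename f = t.bind (fun n => (σ n).rename f) := by
  induction t generalizing σ f with
  | var n => rfl
  | const c => rfl
  | app a b iha ihb => simp [iha, ihb]
  | lam a ih =>
      simp only [bind_lam, rename_lam, ih]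
      have h : (fun n => (upS σ n).rename (shiftF f)) = upS (fun n => (σ n).rename f) := by
        funext n
        cases n with
        | zero => rfl
        | succ m =>
            simp only [upS, Tm.lift, rename_rename]
            rfl
      rw [h]

lemma bind_bind (σ ρ : Nat → Tm C) (t : Tm C) :
    (t.bind σ).bind ρ = t.bind (fun n => (σ n).bind ρ) := by
  induction t generalizing σ ρ with
  | var n => rfl
  | const c => rfl
  | app a b iha ihb => simp [iha, ihb]
  | lam a ih =>
      simp only [bind_lam, ih]
      have h : (fun n => (upS σ n).bind (upS ρ)) = upS (fun n => (σ n).bind ρ) := by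
        funext n
        cases n with
        | zero => rfl
        | succ m =>
            simp only [upS, Tm.lift, bind_rename, rename_bind]
            rfl
      rw [h]

lemma bind_varf (f : Nat → Nat) (t : Tm C) : (t.bind fun n => .var (f n)) = t.rename f := by
  induction t generalizing f with
  | var n => rfl
  | const c => rfl
  | app a b iha ihb => simp [iha, ihb]
  | lam a ih =>
      simp only [bind_lam, rename_lam]
      rw [show (upS fun n => (Tm.var (C := C) (f n))) = fun n => .var (shiftF f n) by
        funext n; cases n <;> simp [upS, shiftF, Tm.lift]]
      rw [ih]

lemma bind_id (t : Tm C) : t.bind .var = t := by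
  have := bind_varf (C := C) id t
  simpa [rename_id] using this

@[simp] lemma mem_fvar_rename {f : Nat → Nat} {t : Tm C} {m : Nat} :
    m ∈ (t.rename f).fvar ↔ ∃ n ∈ t.fvar, f n = m := by
  induction t generalizing f m with
  | var n => simp [Tm.fvar, eq_comm]
  | const c => simp [Tm.fvar]
  | app a b iha ihb =>
      simp only [rename_app, Tm.fvar, Set.mem_union, iha, ihb]
      constructor
      · rintro (⟨n, hn, rfl⟩ | ⟨n, hn, rfl⟩) <;> exact ⟨n, by tauto, rfl⟩
      · rintro ⟨n, hn | hn, rfl⟩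
        · exact Or.inl ⟨n, hn, rfl⟩
        · exact Or.inr ⟨n, hn, rfl⟩
  | lam a ih =>
      simp only [rename_lam, Tm.fvar, Set.mem_setOf_eq, ih]
      constructor
      · rintro ⟨n, hn, hfn⟩
        cases n with
        | zero => simp [shiftF] at hfn
        | succ k =>
            simp only [shiftF] at hfn
            exact ⟨k, hn, by omega⟩
      · rintro ⟨n, hn, rfl⟩
        exact ⟨n + 1, hn, rfl⟩

@[simp] lemma mem_fvar_bind {σ : Nat → Tm C} {t : Tm C} {m : Nat} :
    m ∈ (t.bind σ).fvar ↔ ∃ n ∈ t.fvar, m ∈ (σ n).fvar := by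
  induction t generalizing σ m with
  | var n => simp [Tm.fvar]
  | const c => simp [Tm.fvar]
  | app a b iha ihb =>
      simp only [bind_app, Tm.fvar, Set.mem_union, iha, ihb]
      constructor
      · rintro (⟨n, hn, h⟩ | ⟨n, hn, h⟩) <;> exact ⟨n, by tauto, h⟩
      · rintro ⟨n, hn | hn, h⟩
        · exact Or.inl ⟨n, hn, h⟩
        · exact Or.inr ⟨n, hn, h⟩
  | lam a ih =>
      simp only [bind_lam, Tm.fvar, Set.mem_setOf_eq, ih]
      constructor
      · rintro ⟨n, hn, h⟩
        cases n with
        | zero => simp [upS, Tm.fvar] at h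
        | succ k =>
            simp only [upS, Tm.lift, mem_fvar_rename] at h
            obtain ⟨j, hj, hj2⟩ := h
            have hjm : j = m := by omega
            subst hjm
            exact ⟨k, hn, hj⟩
      · rintro ⟨n, hn, h⟩
        refine ⟨n + 1, hn, ?_⟩
        simp only [upS, Tm.lift, mem_fvar_rename]
        exact ⟨m, h, rfl⟩

lemma bind_congr {σ ρ : Nat → Tm C} {t : Tm C} (h : ∀ n ∈ t.fvar, σ n = ρ n) :
    t.bind σ = t.bind ρ := by
  induction t generalizing σ ρ with
  | var n => simp [h n (by simp [Tm.fvar])]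
  | const c => rfl
  | app a b iha ihb =>
      simp only [bind_app]
      rw [iha (fun n hn => h n (Or.inl hn)), ihb (fun n hn => h n (Or.inr hn))]
  | lam a ih =>
      simp only [bind_lam]
      rw [ih]
      intro n hn
      cases n with
      | zero => rfl
      | succ m => simp [upS, h m hn]

lemma bind_fvar_id {σ : Nat → Tm C} {t : Tm C} (h : ∀ n ∈ t.fvar, σ n = .var n) :
    t.bind σ = t := by
  rw [bind_congr (ρ := .var) h, bind_id]

lemma fvar_finite (t : Tm C) : t.fvar.Finite := by
  induction t with
  | var n => simpa [Tm.fvar] using Set.finite_singleton n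
  | const c => simp [Tm.fvar, Set.finite_empty]
  | app a b iha ihb => exact Set.Finite.union iha ihb
  | lam a ih =>
      have : {n | n + 1 ∈ a.fvar} ⊆ (fun n => n - 1) '' a.fvar := by
        intro n hn; exact ⟨n + 1, hn, by simp⟩
      exact Set.Finite.subset (ih.image _) this

lemma subst0_eq_bind (t s : Tm C) :
    t.subst0 s = t.bind (fun n => match n with | 0 => s | m + 1 => .var m) := rfl

lemma bind_subst0 (σ : Nat → Tm C) (t s : Tm C) :
    (t.subst0 s).bind σ = (t.bind (upS σ)).subst0 (s.bind σ) := by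
  simp only [subst0_eq_bind, bind_bind]
  apply bind_congr
  intro n _
  cases n with
  | zero => rfl
  | succ m =>
      simp only [upS, Tm.lift, bind_rename, bind_var]
      exact (bind_fvar_id (fun n _ => rfl)).symm

lemma lift_bind_upS (σ : Nat → Tm C) (t : Tm C) :
    t.lift.bind (upS σ) = (t.bind σ).lift := by
  simp only [Tm.lift, bind_rename, rename_bind]
  rfl

lemma lift_subst0 (t s : Tm C) : t.lift.subst0 s = t := by
  simp only [subst0_eq_bind, Tm.lift, bind_rename]
  exact bind_fvar_id (fun n _ => rfl)

end Tm
end ICL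

namespace Embed
open ICL PRED2
end Embed

namespace ICL

variable {C : Type}

namespace Conv

lemma refl (t : Tm C) : Conv t t := Relation.EqvGen.refl t

lemma symm {t s : Tm C} (h : Conv t s) : Conv s t := Relation.EqvGen.symm _ _ h

lemma trans {t s u : Tm C} (h1 : Conv t s) (h2 : Conv s u) : Conv t u :=
  Relation.EqvGen.trans _ _ _ h1 h2

lemma of_beta {t s : Tm C} : Conv (.app (.lam t) s) (t.subst0 s) :=
  Relation.EqvGen.rel _ _ (BetaEta.beta t s)

lemma appL {t t' : Tm C} (s : Tm C) (h : Conv t t') : Conv (.app t s) (.app t' s) := by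
  induction h with
  | rel a b hab => exact Relation.EqvGen.rel _ _ (BetaEta.appL s hab)
  | refl a => exact refl _
  | symm a b _ ih => exact ih.symm
  | trans a b c _ _ ih1 ih2 => exact ih1.trans ih2

lemma appR (t : Tm C) {s s' : Tm C} (h : Conv s s') : Conv (.app t s) (.app t s') := by
  induction h with
  | rel a b hab => exact Relation.EqvGen.rel _ _ (BetaEta.appR t hab)
  | refl a => exact refl _
  | symm a b _ ih => exact ih.symm
  | trans a b c _ _ ih1 ih2 => exact ih1.trans ih2

lemma app_congr {t t' s s' : Tm C} (h1 : Conv t t') (h2 : Conv s s') :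
    Conv (.app t s) (.app t' s') := (appL s h1).trans (appR t' h2)

lemma lam_congr {t t' : Tm C} (h : Conv t t') : Conv (.lam t) (.lam t') := by
  induction h with
  | rel a b hab => exact Relation.EqvGen.rel _ _ (BetaEta.lam hab)
  | refl a => exact refl _
  | symm a b _ ih => exact ih.symm
  | trans a b c _ _ ih1 ih2 => exact ih1.trans ih2

end Conv

lemma BetaEta.bind {t t' : Tm C} (σ : Nat → Tm C) (h : BetaEta t t') :
    BetaEta (t.bind σ) (t'.bind σ) := by
  induction h generalizing σ with
  | beta t s =>
      rw [Tm.bind_subst0]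
      exact BetaEta.beta _ _
  | eta t =>
      simp only [Tm.bind_lam, Tm.bind_app, Tm.bind_var, Tm.upS_zero, Tm.lift_bind_upS]
      exact BetaEta.eta _
  | appL s _ ih => exact BetaEta.appL _ (ih σ)
  | appR t _ ih => exact BetaEta.appR _ (ih σ)
  | lam _ ih => exact BetaEta.lam (ih _)

lemma Conv.bind {t t' : Tm C} (σ : Nat → Tm C) (h : Conv t t') :
    Conv (t.bind σ) (t'.bind σ) := by
  induction h with
  | rel a b hab => exact Relation.EqvGen.rel _ _ (hab.bind σ)
  | refl a => exact Conv.refl _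
  | symm a b _ ih => exact ih.symm
  | trans a b c _ _ ih1 ih2 => exact ih1.trans ih2

/-- `K' t = λx. t` (with `x` not occurring in `t`). -/
def Kt (t : Tm C) : Tm C := .lam t.lift

@[simp] lemma fvar_Kt (t : Tm C) : (Kt t).fvar = t.fvar := by
  ext n
  simp only [Kt, Tm.fvar, Set.mem_setOf_eq, Tm.lift, Tm.mem_fvar_rename]
  constructor
  · rintro ⟨m, hm, hm2⟩
    have : m = n := by omega
    exact this ▸ hm
  · intro hn; exact ⟨n, hn, rfl⟩

lemma conv_Kt_app (t u : Tm C) : Conv (.app (Kt t) u) t := by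
  have := Conv.of_beta (t := t.lift) (s := u)
  rwa [Tm.lift_subst0] at this

lemma bind_lift_succ (σ : Nat → Tm C) (a : Tm C) :
    a.lift.bind σ = a.bind (fun n => σ (n + 1)) := by
  simp only [Tm.lift, Tm.bind_rename]
  rfl

lemma conv_H (cL : C) (t : Tm C) : Conv (.app (Hc cL) t) (.app (LT cL) (Kt t)) := by
  have h : ((Tm.app (.const cL) (.lam (.var 1))).subst0 t) = .app (LT cL) (Kt t) := rfl
  exact h ▸ Conv.of_beta

lemma conv_imp (cXi : C) (a b : Tm C) :
    Conv (impTm cXi a b) (.app (.app (XiT cXi) (Kt a)) (Kt b)) := by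
  have h1 : Conv (impTm cXi a b)
      (Tm.app (.lam (.app (.app (.const cXi) (.lam a.lift.lift)) (.lam (.var 1)))) b) := by
    exact Conv.appL b Conv.of_beta
  refine h1.trans ?_
  have h2 : ((Tm.app (.app (.const cXi) (.lam a.lift.lift)) (.lam (.var 1))).subst0 b)
      = .app (.app (XiT cXi) (Kt a)) (Kt b) := by
    simp only [Tm.subst0_eq_bind, Tm.bind_app, Tm.bind_const, Tm.bind_lam]
    have e : a.lift.lift.bind (Tm.upS fun n => match n with | 0 => b | m + 1 => .var m)
        = a.lift := by
      rw [show a.lift.lift = (a.lift).lift from rfl, bind_lift_succ, bind_lift_succ]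
      rw [show (fun n => Tm.upS (fun n => match n with | 0 => b | m + 1 => Tm.var (C := C) m)
            (n + 1 + 1)) = (fun n => Tm.var (C := C) (n + 1)) from funext fun n => rfl]
      rw [Tm.bind_varf (fun n => n + 1) a]
      rfl
    rw [e]
    rfl
  exact h2 ▸ Conv.of_beta

end ICL

namespace ICL

variable {C : Type}

/-- The σ of `subst0`. -/
def sub0 (u : Tm C) : Nat → Tm C := fun n => match n with | 0 => u | m + 1 => .var m

lemma subst0_eq_bind_sub0 (t u : Tm C) : t.subst0 u = t.bind (sub0 u) := rfl

lemma lift_bind_sub0 (a u : Tm C) : a.lift.bind (sub0 u) = a := Tm.lift_subst0 a u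

lemma lift_lift_bind_upS_sub0 (a u : Tm C) :
    a.lift.lift.bind (Tm.upS (sub0 u)) = a.lift := by
  rw [show a.lift.lift = (a.lift).lift from rfl, bind_lift_succ, bind_lift_succ]
  rw [show (fun n => Tm.upS (sub0 u) (n + 1 + 1)) = (fun n => Tm.var (C := C) (n + 1))
    from funext fun n => rfl]
  rw [Tm.bind_varf (fun n => n + 1) a]
  rfl

/-- The term `λx. t2 (u x)`. -/
def Nt (t2 u : Tm C) : Tm C := .lam (.app t2.lift (.app u.lift (.var 0)))

lemma fvar_Nt (t2 u : Tm C) : (Nt t2 u).fvar = t2.fvar ∪ u.fvar := by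
  ext n
  simp only [Nt, Tm.fvar, Set.mem_setOf_eq, Set.mem_union, Tm.lift, Tm.mem_fvar_rename,
    Set.mem_singleton_iff]
  constructor
  · rintro (⟨m, hm, hm2⟩ | ⟨m, hm, hm2⟩ | h)
    · obtain rfl : m = n := by omega
      exact Or.inl hm
    · obtain rfl : m = n := by omega
      exact Or.inr hm
    · omega
  · rintro (h | h)
    · exact Or.inl ⟨n, h, rfl⟩
    · exact Or.inr (Or.inl ⟨n, h, rfl⟩)

lemma conv_Nt_app (t2 u w : Tm C) : Conv (.app (Nt t2 u) w) (.app t2 (.app u w)) := by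
  have h : ((Tm.app t2.lift (.app u.lift (.var 0))).subst0 w) = .app t2 (.app u w) := by
    simp only [subst0_eq_bind_sub0, Tm.bind_app, Tm.bind_var, lift_bind_sub0]
    rfl
  exact h ▸ Conv.of_beta

lemma conv_Ft (cXi : C) (t1 t2 u : Tm C) :
    Conv (.app (Embed.Ft cXi t1 t2) u) (.app (.app (XiT cXi) t1) (Nt t2 u)) := by
  cases t2 with
  | lam b2 =>
      have h1 : Conv (.app (Embed.Ft cXi t1 (.lam b2)) u)
          (.app (.app (XiT cXi) t1)
            (.lam (b2.bind fun n =>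
              ((fun n => match n with
                | 0 => Tm.app (.var 1) (.var 0)
                | (m + 1) => Tm.var (C := C) (m + 2)) n).bind (Tm.upS (sub0 u))))) := by
        have h : ((Tm.app (.app (.const cXi) t1.lift)
            (.lam ((b2.bind fun n => match n with
              | 0 => Tm.app (.var 1) (.var 0)
              | (m + 1) => Tm.var (C := C) (m + 2))))).subst0 u)
            = (.app (.app (XiT cXi) t1)
              (.lam (b2.bind fun n =>
                ((fun n => match n with
                  | 0 => Tm.app (.var 1) (.var 0)
                  | (m + 1) => Tm.var (C := C) (m + 2)) n).bind (Tm.upS (sub0 u))))) := by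
          simp only [subst0_eq_bind_sub0, Tm.bind_app, Tm.bind_const, Tm.bind_lam,
            lift_bind_sub0, Tm.bind_bind]
          rfl
        exact h ▸ Conv.of_beta
      refine h1.trans (Conv.appR _ ?_)
      -- remaining : Conv (lam (b2.bind ρ)) (Nt (lam b2) u)
      refine Conv.symm ?_
      unfold Nt
      refine Conv.lam_congr ?_
      have h2 : Conv (.app (Tm.lam b2).lift (.app u.lift (.var 0)))
          ((b2.rename (Tm.shiftF (· + 1))).subst0 (.app u.lift (.var 0))) := by
        exact Conv.of_beta
      refine h2.trans ?_
      rw [show ((b2.rename (Tm.shiftF (· + 1))).subst0 (.app u.lift (.var 0)))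
          = b2.bind ((sub0 (.app u.lift (.var 0))) ∘ (Tm.shiftF (· + 1))) from
        Tm.bind_rename _ _ b2]
      rw [Tm.bind_congr (t := b2)
        (ρ := fun n =>
          ((fun n => match n with
            | 0 => Tm.app (.var 1) (.var 0)
            | (m + 1) => Tm.var (C := C) (m + 2)) n).bind (Tm.upS (sub0 u)))
        (fun n _ => by cases n <;> rfl)]
      exact Conv.refl _
  | var k =>
      have h : ((Tm.app (.app (.const cXi) t1.lift)
          (.lam (.app (Tm.var k).lift.lift (.app (.var 1) (.var 0))))).subst0 u)
          = .app (.app (XiT cXi) t1) (Nt (.var k) u) := by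
        simp only [subst0_eq_bind_sub0, Tm.bind_app, Tm.bind_const, Tm.bind_lam,
          lift_bind_sub0, lift_lift_bind_upS_sub0]
        rfl
      exact h ▸ Conv.of_beta
  | const c =>
      have h : ((Tm.app (.app (.const cXi) t1.lift)
          (.lam (.app (Tm.const c).lift.lift (.app (.var 1) (.var 0))))).subst0 u)
          = .app (.app (XiT cXi) t1) (Nt (.const c) u) := by
        simp only [subst0_eq_bind_sub0, Tm.bind_app, Tm.bind_const, Tm.bind_lam,
          lift_bind_sub0, lift_lift_bind_upS_sub0]
        rfl
      exact h ▸ Conv.of_beta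
  | app f a =>
      have h : ((Tm.app (.app (.const cXi) t1.lift)
          (.lam (.app (Tm.app f a).lift.lift (.app (.var 1) (.var 0))))).subst0 u)
          = .app (.app (XiT cXi) t1) (Nt (.app f a) u) := by
        simp only [subst0_eq_bind_sub0, Tm.bind_app, Tm.bind_const, Tm.bind_lam,
          lift_bind_sub0, lift_lift_bind_upS_sub0]
        rfl
      exact h ▸ Conv.of_beta

end ICL

namespace ICL

variable {C : Type}

lemma mem_fvS {x : Nat} {Γ : Set (Tm C)} : x ∈ fvS Γ ↔ ∃ t ∈ Γ, x ∈ t.fvar := by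
  simp [fvS]

lemma fvS_mono {Γ Γ' : Set (Tm C)} (h : Γ ⊆ Γ') : fvS Γ ⊆ fvS Γ' := by
  intro x hx
  rw [mem_fvS] at hx ⊢
  obtain ⟨t, ht, hxt⟩ := hx
  exact ⟨t, h ht, hxt⟩

lemma fvS_insert (s : Tm C) (Γ : Set (Tm C)) : fvS (insert s Γ) = s.fvar ∪ fvS Γ := by
  ext x; simp [fvS]

lemma cof_mono {Γ Γ' : Set (Tm C)} (h : Γ' ⊆ Γ) (hc : ((fvS Γ)ᶜ).Infinite) :
    ((fvS Γ')ᶜ).Infinite :=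
  hc.mono (Set.compl_subset_compl.2 (fvS_mono h))

lemma cof_insert {Γ : Set (Tm C)} (h : ((fvS Γ)ᶜ).Infinite) (s : Tm C) :
    ((fvS (insert s Γ))ᶜ).Infinite := by
  rw [fvS_insert, Set.compl_union, Set.inter_comm, ← Set.diff_eq]
  exact h.diff (Tm.fvar_finite s)

lemma exists_fresh {Γ : Set (Tm C)} (h : ((fvS Γ)ᶜ).Infinite) {s : Set Nat} (hs : s.Finite) :
    ∃ x, x ∉ fvS Γ ∧ x ∉ s := by
  obtain ⟨x, hx⟩ := (h.diff hs).nonempty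
  exact ⟨x, hx.1, hx.2⟩

lemma dnAx_bind (cXi cL : C) (σ : Nat → Tm C) : (dnAx cXi cL).bind σ = dnAx cXi cL := rfl

/-- Simultaneous substitution & weakening for `IDeriv`. -/
lemma IDeriv.bindW {B : Type} {cXi cL : C} {cA : B → C} {fl dn : Bool}
    {Γ : Set (Tm C)} {t : Tm C} (h : IDeriv cXi cL cA fl dn Γ t) :
    ∀ (σ : Nat → Tm C) (Γ' : Set (Tm C)), (∀ s ∈ Γ, s.bind σ ∈ Γ') →
      ((fvS Γ')ᶜ).Infinite → IDeriv cXi cL cA fl dn Γ' (t.bind σ) := by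
  induction h with
  | ax h => exact fun σ Γ' hsub _ => .ax (hsub _ h)
  | axLH => exact fun σ Γ' hsub _ => .axLH
  | axLA b => exact fun σ Γ' hsub _ => .axLA b
  | axDN hdn => exact fun σ Γ' hsub _ => (dnAx_bind _ _ σ) ▸ (IDeriv.axDN hdn)
  | eq h12 conv ih => exact fun σ Γ' hsub hcof => .eq (ih σ Γ' hsub hcof) (conv.bind σ)
  | hi h ih => exact fun σ Γ' hsub hcof => .hi (ih σ Γ' hsub hcof)
  | xiE h1 h2 ih1 ih2 =>
      exact fun σ Γ' hsub hcof => .xiE (ih1 σ Γ' hsub hcof) (ih2 σ Γ' hsub hcof)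
  | @xiI Γ t1 t2 x h1 h2 hx hx1 hx2 ih1 ih2 =>
      intro σ Γ' hsub hcof
      obtain ⟨x', hx'1, hx'2⟩ := exists_fresh hcof
        (((Tm.fvar_finite (t1.bind σ)).union (Tm.fvar_finite (t2.bind σ))))
      set σ' : Nat → Tm C := fun n => if n = x then Tm.var x' else σ n with hσ'
      have hσ'x : σ' x = Tm.var x' := by simp [hσ']
      have e2 : (Tm.app t2 (.var x)).bind σ' = .app (t2.bind σ) (.var x') := by
        simp only [Tm.bind_app, Tm.bind_var, hσ'x]
        congr 1
        exact Tm.bind_congr (fun n hn => if_neg (by rintro rfl; exact hx2 hn))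
      have e1 : (Tm.app t1 (.var x)).bind σ' = .app (t1.bind σ) (.var x') := by
        simp only [Tm.bind_app, Tm.bind_var, hσ'x]
        congr 1
        exact Tm.bind_congr (fun n hn => if_neg (by rintro rfl; exact hx1 hn))
      refine IDeriv.xiI x' ?_ ?_ hx'1 (fun hc => hx'2 (Or.inl hc)) (fun hc => hx'2 (Or.inr hc))
      · have := ih1 σ' (insert (.app (t1.bind σ) (.var x')) Γ') ?_ (cof_insert hcof _)
        · rwa [e2] at this
        · intro s hs
          rcases hs with rfl | hs
          · rw [e1]; exact Set.mem_insert _ _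
          · have : s.bind σ' = s.bind σ :=
              Tm.bind_congr (fun n hn => if_neg (by rintro rfl; exact hx (mem_fvS.2 ⟨s, hs, hn⟩)))
            rw [this]
            exact Set.mem_insert_of_mem _ (hsub s hs)
      · exact ih2 σ Γ' hsub hcof
  | @xiH Γ t1 t2 x h1 h2 hx hx1 hx2 ih1 ih2 =>
      intro σ Γ' hsub hcof
      obtain ⟨x', hx'1, hx'2⟩ := exists_fresh hcof
        (((Tm.fvar_finite (t1.bind σ)).union (Tm.fvar_finite (t2.bind σ))))
      set σ' : Nat → Tm C := fun n => if n = x then Tm.var x' else σ n with hσ'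
      have hσ'x : σ' x = Tm.var x' := by simp [hσ']
      have e2 : (Tm.app (Hc cL) (.app t2 (.var x))).bind σ'
          = .app (Hc cL) (.app (t2.bind σ) (.var x')) := by
        simp only [Tm.bind_app, Tm.bind_var, hσ'x]
        congr 2
        exact Tm.bind_congr (fun n hn => if_neg (by rintro rfl; exact hx2 hn))
      have e1 : (Tm.app t1 (.var x)).bind σ' = .app (t1.bind σ) (.var x') := by
        simp only [Tm.bind_app, Tm.bind_var, hσ'x]
        congr 1
        exact Tm.bind_congr (fun n hn => if_neg (by rintro rfl; exact hx1 hn))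
      refine IDeriv.xiH x' ?_ ?_ hx'1 (fun hc => hx'2 (Or.inl hc)) (fun hc => hx'2 (Or.inr hc))
      · have := ih1 σ' (insert (.app (t1.bind σ) (.var x')) Γ') ?_ (cof_insert hcof _)
        · rwa [e2] at this
        · intro s hs
          rcases hs with rfl | hs
          · rw [e1]; exact Set.mem_insert _ _
          · have : s.bind σ' = s.bind σ :=
              Tm.bind_congr (fun n hn => if_neg (by rintro rfl; exact hx (mem_fvS.2 ⟨s, hs, hn⟩)))
            rw [this]
            exact Set.mem_insert_of_mem _ (hsub s hs)
      · exact ih2 σ Γ' hsub hcof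
  | @fL Γ t1 t2 x hfl h1 h2 hx hx1 hx2 ih1 ih2 =>
      intro σ Γ' hsub hcof
      obtain ⟨x', hx'1, hx'2⟩ := exists_fresh hcof
        (((Tm.fvar_finite (t1.bind σ)).union (Tm.fvar_finite (t2.bind σ))))
      set σ' : Nat → Tm C := fun n => if n = x then Tm.var x' else σ n with hσ'
      have hσ'x : σ' x = Tm.var x' := by simp [hσ']
      have e2 : (Tm.app (LT cL) t2).bind σ' = .app (LT cL) (t2.bind σ) := by
        simp only [Tm.bind_app]
        congr 1
        exact Tm.bind_congr (fun n hn => if_neg (by rintro rfl; exact hx2 hn))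
      have e1 : (Tm.app t1 (.var x)).bind σ' = .app (t1.bind σ) (.var x') := by
        simp only [Tm.bind_app, Tm.bind_var, hσ'x]
        congr 1
        exact Tm.bind_congr (fun n hn => if_neg (by rintro rfl; exact hx1 hn))
      refine IDeriv.fL x' hfl ?_ ?_ hx'1 (fun hc => hx'2 (Or.inl hc)) (fun hc => hx'2 (Or.inr hc))
      · have := ih1 σ' (insert (.app (t1.bind σ) (.var x')) Γ') ?_ (cof_insert hcof _)
        · rwa [e2] at this
        · intro s hs
          rcases hs with rfl | hs
          · rw [e1]; exact Set.mem_insert _ _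
          · have : s.bind σ' = s.bind σ :=
              Tm.bind_congr (fun n hn => if_neg (by rintro rfl; exact hx (mem_fvS.2 ⟨s, hs, hn⟩)))
            rw [this]
            exact Set.mem_insert_of_mem _ (hsub s hs)
      · exact ih2 σ Γ' hsub hcof

/-- Weakening. -/
lemma IDeriv.wk {B : Type} {cXi cL : C} {cA : B → C} {fl dn : Bool}
    {Γ Γ' : Set (Tm C)} {t : Tm C} (h : IDeriv cXi cL cA fl dn Γ t) (hsub : Γ ⊆ Γ')
    (hcof : ((fvS Γ')ᶜ).Infinite) : IDeriv cXi cL cA fl dn Γ' t := by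
  have := h.bindW Tm.var Γ' (fun s hs => by rw [Tm.bind_id]; exact hsub hs) hcof
  rwa [Tm.bind_id] at this

end ICL

namespace ICL

variable {C : Type}

lemma cof_of_finite {Γ : Set (Tm C)} (h : Γ.Finite) : ((fvS Γ)ᶜ).Infinite := by
  have : (fvS Γ).Finite := by
    have := Set.Finite.biUnion h (fun t _ => Tm.fvar_finite t)
    simpa [fvS] using this
  exact this.infinite_compl

lemma IDeriv.cutAux {B : Type} {cXi cL : C} {cA : B → C} {fl dn : Bool}
    {Δ : Set (Tm C)} {t : Tm C} (h : IDeriv cXi cL cA fl dn Δ t) :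
    ∀ Γ s, Δ = insert s Γ → IDeriv cXi cL cA fl dn Γ s → ((fvS Γ)ᶜ).Infinite →
      IDeriv cXi cL cA fl dn Γ t := by
  induction h with
  | ax hmem =>
      intro Γ s hΔ hs _
      subst hΔ
      rcases hmem with rfl | hmem
      · exact hs
      · exact .ax hmem
  | axLH => exact fun _ _ _ _ _ => .axLH
  | axLA b => exact fun _ _ _ _ _ => .axLA b
  | axDN hdn => exact fun _ _ _ _ _ => .axDN hdn
  | eq h12 conv ih => exact fun Γ s hΔ hs hcof => .eq (ih Γ s hΔ hs hcof) conv
  | hi h ih => exact fun Γ s hΔ hs hcof => .hi (ih Γ s hΔ hs hcof)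
  | xiE h1 h2 ih1 ih2 =>
      exact fun Γ s hΔ hs hcof => .xiE (ih1 Γ s hΔ hs hcof) (ih2 Γ s hΔ hs hcof)
  | @xiI Δ' t1 t2 x h1 h2 hx hx1 hx2 ih1 ih2 =>
      intro Γ s hΔ hs hcof
      subst hΔ
      have hxΓ : x ∉ fvS Γ := fun hc => hx (fvS_mono (Set.subset_insert _ _) hc)
      refine IDeriv.xiI x ?_ (ih2 Γ s rfl hs hcof) hxΓ hx1 hx2
      exact ih1 (insert (.app t1 (.var x)) Γ) s (Set.insert_comm _ _ _)
        (hs.wk (Set.subset_insert _ _) (cof_insert hcof _)) (cof_insert hcof _)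
  | @xiH Δ' t1 t2 x h1 h2 hx hx1 hx2 ih1 ih2 =>
      intro Γ s hΔ hs hcof
      subst hΔ
      have hxΓ : x ∉ fvS Γ := fun hc => hx (fvS_mono (Set.subset_insert _ _) hc)
      refine IDeriv.xiH x ?_ (ih2 Γ s rfl hs hcof) hxΓ hx1 hx2
      exact ih1 (insert (.app t1 (.var x)) Γ) s (Set.insert_comm _ _ _)
        (hs.wk (Set.subset_insert _ _) (cof_insert hcof _)) (cof_insert hcof _)
  | @fL Δ' t1 t2 x hfl h1 h2 hx hx1 hx2 ih1 ih2 =>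
      intro Γ s hΔ hs hcof
      subst hΔ
      have hxΓ : x ∉ fvS Γ := fun hc => hx (fvS_mono (Set.subset_insert _ _) hc)
      refine IDeriv.fL x hfl ?_ (ih2 Γ s rfl hs hcof) hxΓ hx1 hx2
      exact ih1 (insert (.app t1 (.var x)) Γ) s (Set.insert_comm _ _ _)
        (hs.wk (Set.subset_insert _ _) (cof_insert hcof _)) (cof_insert hcof _)

/-- Cut admissibility. -/
lemma IDeriv.cut {B : Type} {cXi cL : C} {cA : B → C} {fl dn : Bool}
    {Γ : Set (Tm C)} {s t : Tm C} (h : IDeriv cXi cL cA fl dn (insert s Γ) t)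
    (hs : IDeriv cXi cL cA fl dn Γ s) (hcof : ((fvS Γ)ᶜ).Infinite) :
    IDeriv cXi cL cA fl dn Γ t :=
  h.cutAux Γ s rfl hs hcof

/-- Compactness: a derivation only uses finitely many hypotheses. -/
lemma IDeriv.compact {B : Type} {cXi cL : C} {cA : B → C} {fl dn : Bool}
    {Γ : Set (Tm C)} {t : Tm C} (h : IDeriv cXi cL cA fl dn Γ t) :
    ∃ Γ' ⊆ Γ, Γ'.Finite ∧ IDeriv cXi cL cA fl dn Γ' t := by
  induction h with
  | @ax Γ t hmem => exact ⟨{t}, by simpa using hmem, Set.finite_singleton t, .ax rfl⟩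
  | axLH => exact ⟨∅, Set.empty_subset _, Set.finite_empty, .axLH⟩
  | axLA b => exact ⟨∅, Set.empty_subset _, Set.finite_empty, .axLA b⟩
  | axDN hdn => exact ⟨∅, Set.empty_subset _, Set.finite_empty, .axDN hdn⟩
  | eq h12 conv ih =>
      obtain ⟨Γ', hsub, hfin, hd⟩ := ih
      exact ⟨Γ', hsub, hfin, .eq hd conv⟩
  | hi h ih =>
      obtain ⟨Γ', hsub, hfin, hd⟩ := ih
      exact ⟨Γ', hsub, hfin, .hi hd⟩
  | xiE h1 h2 ih1 ih2 =>
      obtain ⟨Γ1, hsub1, hfin1, hd1⟩ := ih1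
      obtain ⟨Γ2, hsub2, hfin2, hd2⟩ := ih2
      refine ⟨Γ1 ∪ Γ2, Set.union_subset hsub1 hsub2, hfin1.union hfin2, ?_⟩
      exact .xiE (hd1.wk Set.subset_union_left (cof_of_finite (hfin1.union hfin2)))
        (hd2.wk Set.subset_union_right (cof_of_finite (hfin1.union hfin2)))
  | @xiI Δ' t1 t2 x h1 h2 hx hx1 hx2 ih1 ih2 =>
      obtain ⟨Γ1, hsub1, hfin1, hd1⟩ := ih1
      obtain ⟨Γ2, hsub2, hfin2, hd2⟩ := ih2
      set Γ' := (Γ1 \ {Tm.app t1 (.var x)}) ∪ Γ2 with hΓ'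
      have hfin : Γ'.Finite := (hfin1.diff (t := _)).union hfin2
      have hsub : Γ' ⊆ Δ' := by
        intro u hu
        rcases hu with ⟨hu1, hu2⟩ | hu
        · rcases hsub1 hu1 with rfl | h
          · exact absurd rfl hu2
          · exact h
        · exact hsub2 hu
      refine ⟨Γ', hsub, hfin, ?_⟩
      have hxΓ' : x ∉ fvS Γ' := fun hc => hx (fvS_mono hsub hc)
      refine IDeriv.xiI x ?_ (hd2.wk (by intro u hu; exact Or.inr hu) (cof_of_finite hfin))
        hxΓ' hx1 hx2
      refine hd1.wk ?_ (cof_insert (cof_of_finite hfin) _)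
      intro u hu
      rcases hsub1 hu with rfl | _
      · exact Set.mem_insert _ _
      · by_cases he : u = Tm.app t1 (.var x)
        · exact he ▸ Set.mem_insert _ _
        · exact Set.mem_insert_of_mem _ (Or.inl ⟨hu, he⟩)
  | @xiH Δ' t1 t2 x h1 h2 hx hx1 hx2 ih1 ih2 =>
      obtain ⟨Γ1, hsub1, hfin1, hd1⟩ := ih1
      obtain ⟨Γ2, hsub2, hfin2, hd2⟩ := ih2
      set Γ' := (Γ1 \ {Tm.app t1 (.var x)}) ∪ Γ2 with hΓ'
      have hfin : Γ'.Finite := (hfin1.diff (t := _)).union hfin2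
      have hsub : Γ' ⊆ Δ' := by
        intro u hu
        rcases hu with ⟨hu1, hu2⟩ | hu
        · rcases hsub1 hu1 with rfl | h
          · exact absurd rfl hu2
          · exact h
        · exact hsub2 hu
      refine ⟨Γ', hsub, hfin, ?_⟩
      have hxΓ' : x ∉ fvS Γ' := fun hc => hx (fvS_mono hsub hc)
      refine IDeriv.xiH x ?_ (hd2.wk (by intro u hu; exact Or.inr hu) (cof_of_finite hfin))
        hxΓ' hx1 hx2
      refine hd1.wk ?_ (cof_insert (cof_of_finite hfin) _)
      intro u hu
      rcases hsub1 hu with rfl | _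
      · exact Set.mem_insert _ _
      · by_cases he : u = Tm.app t1 (.var x)
        · exact he ▸ Set.mem_insert _ _
        · exact Set.mem_insert_of_mem _ (Or.inl ⟨hu, he⟩)
  | @fL Δ' t1 t2 x hfl h1 h2 hx hx1 hx2 ih1 ih2 =>
      obtain ⟨Γ1, hsub1, hfin1, hd1⟩ := ih1
      obtain ⟨Γ2, hsub2, hfin2, hd2⟩ := ih2
      set Γ' := (Γ1 \ {Tm.app t1 (.var x)}) ∪ Γ2 with hΓ'
      have hfin : Γ'.Finite := (hfin1.diff (t := _)).union hfin2
      have hsub : Γ' ⊆ Δ' := by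
        intro u hu
        rcases hu with ⟨hu1, hu2⟩ | hu
        · rcases hsub1 hu1 with rfl | h
          · exact absurd rfl hu2
          · exact h
        · exact hsub2 hu
      refine ⟨Γ', hsub, hfin, ?_⟩
      have hxΓ' : x ∉ fvS Γ' := fun hc => hx (fvS_mono hsub hc)
      refine IDeriv.fL x hfl ?_ (hd2.wk (by intro u hu; exact Or.inr hu) (cof_of_finite hfin))
        hxΓ' hx1 hx2
      refine hd1.wk ?_ (cof_insert (cof_of_finite hfin) _)
      intro u hu
      rcases hsub1 hu with rfl | _
      · exact Set.mem_insert _ _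
      · by_cases he : u = Tm.app t1 (.var x)
        · exact he ▸ Set.mem_insert _ _
        · exact Set.mem_insert_of_mem _ (Or.inl ⟨hu, he⟩)

end ICL

namespace Embed

open ICL PRED2

variable {B : Type} [DecidableEq B] {Con : PRED2.Ty B → Type}

lemma fvar_Hc {C : Type} (cL : C) : (Hc cL).fvar = ∅ := by
  ext n
  simp only [Hc, Tm.fvar, Set.mem_setOf_eq, Set.mem_union, Set.mem_empty_iff_false, iff_false,
    Set.mem_singleton_iff, false_or]
  omega

lemma fvar_impC {C : Type} (cXi : C) : (impC cXi).fvar = ∅ := by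
  ext n
  simp only [impC, Tm.fvar, Set.mem_setOf_eq, Set.mem_union, Set.mem_empty_iff_false, iff_false,
    Set.mem_singleton_iff, false_or]
  omega

lemma fvar_lift_empty {C : Type} {t : Tm C} (h : t.fvar = ∅) : t.lift.fvar = ∅ := by
  ext n
  simp only [Tm.lift, Tm.mem_fvar_rename, Set.mem_empty_iff_false, iff_false]
  rintro ⟨m, hm, _⟩
  rw [h] at hm
  exact hm

lemma fvar_Ft {C : Type} (cXi : C) (c2 : C) (t2 : Tm C) (h : t2.fvar = ∅) :
    (Ft cXi (.const c2) t2).fvar = ∅ := by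
  cases t2 with
  | lam b2 =>
      ext n
      simp only [Ft, Tm.fvar, Set.mem_setOf_eq, Set.mem_union, Set.mem_empty_iff_false,
        iff_false, Tm.lift, Tm.mem_fvar_rename, Tm.mem_fvar_bind, Set.mem_singleton_iff,
        false_or, false_and, exists_false]
      rintro ⟨k, hk, hm⟩
      cases k with
      | zero =>
          simp only [Tm.fvar, Set.mem_union, Set.mem_singleton_iff] at hm
          omega
      | succ j =>
          simp only [Tm.fvar, Set.mem_singleton_iff] at hm
          have hj : j ∈ (Tm.lam b2).fvar := hk
          rw [h] at hj
          exact hj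
  | var k =>
      exfalso
      have : k ∈ (Tm.var (C := C) k).fvar := by simp [Tm.fvar]
      rw [h] at this
      exact this
  | const c =>
      have h2 : ((Tm.const (C := C) c).lift.lift).fvar = ∅ :=
        fvar_lift_empty (fvar_lift_empty h)
      ext n
      simp only [Ft, Tm.fvar, Set.mem_setOf_eq, Set.mem_union, Set.mem_empty_iff_false,
        iff_false, Set.mem_singleton_iff, false_or, Tm.lift, Tm.mem_fvar_rename, false_and,
        exists_false]
      omega
  | app f a =>
      ext n
      simp only [Ft, Tm.fvar, Tm.lift, Tm.rename_app, Set.mem_setOf_eq, Set.mem_union,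
        Set.mem_empty_iff_false, iff_false, Set.mem_singleton_iff, false_or,
        Tm.mem_fvar_rename, false_and, exists_false]
      rintro ((⟨j, ⟨k, hk, hk2⟩, hj2⟩ | ⟨j, ⟨k, hk, hk2⟩, hj2⟩) | hx | hx)
      · have : k ∈ (Tm.app f a).fvar := Or.inl hk
        rw [h] at this
        exact this
      · have : k ∈ (Tm.app f a).fvar := Or.inr hk
        rw [h] at this
        exact this
      · omega
      · omega

lemma fvar_Atm (τ : Ty B) : (Atm (Con := Con) τ).fvar = ∅ := by
  induction τ with
  | o => exact fvar_Hc _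
  | base b => simp [Atm, Tm.fvar]
  | arr b τ ih => exact fvar_Ft _ _ _ ih

lemma Atm_bind (σ : Nat → Tm (SCon B Con)) (τ : Ty B) : (Atm (Con := Con) τ).bind σ = Atm τ :=
  Tm.bind_fvar_id (by simp [fvar_Atm])

lemma Atm_rename (f : Nat → Nat) (τ : Ty B) : (Atm (Con := Con) τ).rename f = Atm τ := by
  rw [Tm.rename_congr (g := id) (by simp [fvar_Atm]), Tm.rename_id]

lemma impC_bind {C : Type} (cXi : C) (σ : Nat → Tm C) : (impC cXi).bind σ = impC cXi := rfl

lemma Hc_bind {C : Type} (cL : C) (σ : Nat → Tm C) : (Hc cL).bind σ = Hc cL := rfl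

lemma mem_fvar_tr {τ' : Ty B} {q : Trm B Con τ'} :
    ∀ {env : Ty B × Nat → Nat} {n : Nat},
      n ∈ (tr env q).fvar ↔ ∃ y ∈ FV q, env y = n := by
  induction q with
  | var τ k => intro env n; simp [tr, FV, Tm.fvar, eq_comm]
  | con c => intro env n; simp [tr, FV, Tm.fvar]
  | app f a ihf iha =>
      intro env n
      simp only [tr, FV, Tm.fvar, Set.mem_union, ihf, iha, Finset.mem_union]
      constructor
      · rintro (⟨y, hy, rfl⟩ | ⟨y, hy, rfl⟩) <;> exact ⟨y, by tauto, rfl⟩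
      · rintro ⟨y, hy | hy, rfl⟩
        · exact Or.inl ⟨y, hy, rfl⟩
        · exact Or.inr ⟨y, hy, rfl⟩
  | imp φ ψ ihφ ihψ =>
      intro env n
      have hshape : (tr env (Trm.imp φ ψ)).fvar
          = ((impC (SCon.Xi : SCon B Con)).fvar ∪ (tr env φ).fvar) ∪ (tr env ψ).fvar := rfl
      rw [hshape, fvar_impC, Set.empty_union]
      constructor
      · rintro (h | h)
        · obtain ⟨y, hy, rfl⟩ := ihφ.1 h
          exact ⟨y, by simp [FV, hy], rfl⟩
        · obtain ⟨y, hy, rfl⟩ := ihψ.1 h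
          exact ⟨y, by simp [FV, hy], rfl⟩
      · rintro ⟨y, hy, rfl⟩
        simp only [FV, Finset.mem_union] at hy
        rcases hy with hy | hy
        · exact Or.inl (ihφ.2 ⟨y, hy, rfl⟩)
        · exact Or.inr (ihψ.2 ⟨y, hy, rfl⟩)
  | all τ hτ m φ ih =>
      intro env n
      simp only [tr, FV, XiT, Tm.fvar, Set.mem_union, Set.mem_empty_iff_false, false_or,
        fvar_Atm, Set.mem_setOf_eq, ih, Finset.mem_erase]
      constructor
      · rintro ⟨y, hy, hyn⟩
        by_cases hym : y = (τ, m)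
        · subst hym; simp at hyn
        · rw [if_neg hym] at hyn
          exact ⟨y, ⟨hym, hy⟩, by omega⟩
      · rintro ⟨y, ⟨hym, hy⟩, rfl⟩
        exact ⟨y, hy, by rw [if_neg hym]⟩

lemma tr_congr {τ' : Ty B} {q : Trm B Con τ'} :
    ∀ {env env' : Ty B × Nat → Nat}, (∀ y ∈ FV q, env y = env' y) → tr env q = tr env' q := by
  induction q with
  | var τ k =>
      intro env env' h
      show Tm.var (env (τ, k)) = Tm.var (env' (τ, k))
      rw [h (τ, k) (by simp [FV])]
  | con c => intro env env' h; rfl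
  | app f a ihf iha =>
      intro env env' h
      simp only [tr]
      rw [ihf (fun y hy => h y (by simp [FV, hy])), iha (fun y hy => h y (by simp [FV, hy]))]
  | imp φ ψ ihφ ihψ =>
      intro env env' h
      simp only [tr, impTm]
      rw [ihφ (fun y hy => h y (by simp [FV, hy])), ihψ (fun y hy => h y (by simp [FV, hy]))]
  | all τ hτ m φ ih =>
      intro env env' h
      simp only [tr]
      congr 1
      congr 1
      apply ih
      intro y hy
      by_cases hym : y = (τ, m)
      · simp [hym]
      · rw [if_neg hym, if_neg hym, h y (by simp [FV, Finset.mem_erase, hym, hy])]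

lemma tr_rename {τ' : Ty B} {q : Trm B Con τ'} :
    ∀ {env : Ty B × Nat → Nat} {f : Nat → Nat},
      (tr env q).rename f = tr (fun y => f (env y)) q := by
  induction q with
  | var τ k => intro env f; rfl
  | con c => intro env f; rfl
  | app g a ihg iha => intro env f; simp only [tr, Tm.rename_app, ihg, iha]
  | imp φ ψ ihφ ihψ =>
      intro env f
      simp only [tr, impTm, Tm.rename_app, ihφ, ihψ]
      rw [Tm.rename_congr (g := id) (by simp [fvar_impC]), Tm.rename_id]
  | all τ hτ m φ ih =>
      intro env f
      simp only [tr, Tm.rename_app, Tm.rename_lam, Tm.rename_const, XiT, Atm_rename, ih]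
      congr 2
      apply tr_congr
      intro y _
      by_cases hym : y = (τ, m)
      · simp [hym, Tm.shiftF]
      · rw [if_neg hym, if_neg hym]
        rfl

lemma tr_lift {τ' : Ty B} {q : Trm B Con τ'} {env : Ty B × Nat → Nat} :
    tr (fun y => env y + 1) q = (tr env q).lift := by
  rw [Tm.lift, tr_rename]

lemma tr_bind {τ' : Ty B} {q : Trm B Con τ'} :
    ∀ {env env2 : Ty B × Nat → Nat} {σ : Nat → Tm (SCon B Con)},
      (∀ y ∈ FV q, σ (env y) = .var (env2 y)) → (tr env q).bind σ = tr env2 q := by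
  induction q with
  | var τ k => intro env env2 σ h; exact h _ (by simp [FV])
  | con c => intro env env2 σ h; rfl
  | app f a ihf iha =>
      intro env env2 σ h
      simp only [tr, Tm.bind_app]
      rw [ihf (fun y hy => h y (by simp [FV, hy])), iha (fun y hy => h y (by simp [FV, hy]))]
  | imp φ ψ ihφ ihψ =>
      intro env env2 σ h
      simp only [tr, impTm, Tm.bind_app, impC_bind]
      rw [ihφ (fun y hy => h y (by simp [FV, hy])), ihψ (fun y hy => h y (by simp [FV, hy]))]
  | all τ hτ m φ ih =>
      intro env env2 σ h
      simp only [tr, Tm.bind_app, Tm.bind_lam, Tm.bind_const, XiT, Atm_bind]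
      congr 2
      apply ih
      intro y hy
      by_cases hym : y = (τ, m)
      · simp [hym]
      · rw [if_neg hym, if_neg hym]
        simp only [Tm.upS_succ]
        rw [h y (by simp [FV, Finset.mem_erase, hym, hy])]
        rfl

end Embed

namespace Embed

open ICL PRED2

variable {B : Type} [DecidableEq B] {Con : PRED2.Ty B → Type}

lemma vupd_self (v : ∀ τ : Ty B, Nat → Trm B Con τ) (τ0 : Ty B) (m : Nat) (t : Trm B Con τ0) :
    vupd v τ0 m t τ0 m = t := by
  simp [vupd]

lemma vupd_ne (v : ∀ τ : Ty B, Nat → Trm B Con τ) (τ0 : Ty B) (m : Nat) (t : Trm B Con τ0)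
    {τ : Ty B} {n : Nat} (h : (τ, n) ≠ (τ0, m)) : vupd v τ0 m t τ n = v τ n := by
  unfold vupd
  by_cases h1 : τ = τ0
  · subst h1
    rw [dif_pos rfl, if_neg (fun hn => h (by rw [hn]))]
  · rw [dif_neg h1]

lemma fresh_not_mem (v : ∀ τ : Ty B, Nat → Trm B Con τ) (s : Finset (Ty B × Nat))
    {y : Ty B × Nat} (hy : y ∈ s) (τ' : Ty B) : (τ', fresh v s) ∉ FV (v y.1 y.2) := by
  intro hmem
  have h1 : ((τ' : Ty B), fresh v s).2 ≤ (FV (v y.1 y.2)).sup (fun z => z.2) :=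
    Finset.le_sup hmem
  have h2 : (FV (v y.1 y.2)).sup (fun z => z.2)
      ≤ s.sup (fun y => (FV (v y.1 y.2)).sup fun z => z.2) :=
    Finset.le_sup (f := fun y => (FV (v y.1 y.2)).sup fun z => z.2) hy
  simp only [fresh] at h1
  omega

lemma FV_substV_mono {τ' : Ty B} (q : Trm B Con τ') :
    ∀ (v : ∀ τ : Ty B, Nat → Trm B Con τ), ∀ y ∈ FV q, FV (v y.1 y.2) ⊆ FV (substV v q) := by
  induction q with
  | var τ k =>
      intro v y hy
      simp only [FV, Finset.mem_singleton] at hy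
      subst hy
      intro z hz
      exact hz
  | con c => intro v y hy; simp [FV] at hy
  | app f a ihf iha =>
      intro v y hy
      simp only [FV, Finset.mem_union] at hy
      rcases hy with hy | hy
      · exact (ihf v y hy).trans (by simp [substV, FV, Finset.subset_union_left])
      · exact (iha v y hy).trans (by simp [substV, FV, Finset.subset_union_right])
  | imp φ ψ ihφ ihψ =>
      intro v y hy
      simp only [FV, Finset.mem_union] at hy
      rcases hy with hy | hy
      · exact (ihφ v y hy).trans (by simp [substV, FV, Finset.subset_union_left])
      · exact (ihψ v y hy).trans (by simp [substV, FV, Finset.subset_union_right])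
  | all τb hb mb φ ih =>
      intro v y hy
      simp only [FV, Finset.mem_erase] at hy
      obtain ⟨hne, hy⟩ := hy
      have heq : vupd v τb mb (.var τb (fresh v ((FV φ).erase (τb, mb)))) y.1 y.2 = v y.1 y.2 :=
        vupd_ne _ _ _ _ (by rw [Prod.mk.eta]; exact hne)
      have hsub := ih (vupd v τb mb (.var τb (fresh v ((FV φ).erase (τb, mb))))) y
        (by rw [heq] at *; exact hy)
      rw [heq] at hsub
      intro z hz
      simp only [substV, FV, Finset.mem_erase]
      refine ⟨?_, hsub hz⟩
      intro hzeq
      subst hzeq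
      exact fresh_not_mem v ((FV φ).erase (τb, mb)) (Finset.mem_erase.2 ⟨hne, hy⟩) τb hz

lemma tr_substV {τ' : Ty B} (q : Trm B Con τ') :
    ∀ (v : ∀ τ : Ty B, Nat → Trm B Con τ) (env env0 : Ty B × Nat → Nat)
      (σ : Nat → Tm (SCon B Con)),
      (∀ y ∈ FV q, σ (env0 y) = tr env (v y.1 y.2)) →
      tr env (substV v q) = (tr env0 q).bind σ := by
  induction q with
  | var τ k =>
      intro v env env0 σ h
      exact (h (τ, k) (by simp [FV])).symm
  | con c => intro v env env0 σ h; rfl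
  | app f a ihf iha =>
      intro v env env0 σ h
      simp only [substV, tr, Tm.bind_app]
      rw [ihf v env env0 σ (fun y hy => h y (by simp [FV, hy])),
        iha v env env0 σ (fun y hy => h y (by simp [FV, hy]))]
  | imp φ ψ ihφ ihψ =>
      intro v env env0 σ h
      simp only [substV, tr, impTm, Tm.bind_app, impC_bind]
      rw [ihφ v env env0 σ (fun y hy => h y (by simp [FV, hy])),
        ihψ v env env0 σ (fun y hy => h y (by simp [FV, hy]))]
  | all τq hq m φ ih =>
      intro v env env0 σ h
      simp only [substV, tr, Tm.bind_app, Tm.bind_lam, Tm.bind_const, XiT, Atm_bind]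
      congr 2
      set m' := fresh v ((FV φ).erase (τq, m)) with hm'
      set v' := vupd v τq m (.var τq m') with hv'
      apply ih v' (fun y => if y = (τq, m') then 0 else env y + 1)
        (fun y => if y = (τq, m) then 0 else env0 y + 1) (Tm.upS σ)
      intro y hy
      by_cases hym : y = (τq, m)
      · subst hym
        rw [if_pos rfl]
        have : v' τq m = .var τq m' := by rw [hv']; exact vupd_self _ _ _ _
        rw [this]
        simp [tr]
      · rw [if_neg hym]
        have h1 : v' y.1 y.2 = v y.1 y.2 := by
          rw [hv']; exact vupd_ne _ _ _ _ (by rw [Prod.mk.eta]; exact hym)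
        rw [h1]
        simp only [Tm.upS_succ]
        rw [h y (Finset.mem_erase.2 ⟨hym, hy⟩)]
        have h2 : tr (fun z => if z = (τq, m') then 0 else env z + 1) (v y.1 y.2)
            = tr (fun z => env z + 1) (v y.1 y.2) := by
          apply tr_congr
          intro z hz
          rw [if_neg]
          intro hzeq
          subst hzeq
          exact fresh_not_mem v ((FV φ).erase (τq, m)) (Finset.mem_erase.2 ⟨hym, hy⟩) τq hz
        rw [h2, tr_lift]

lemma tr_subst1 {τ : Ty B} {m : Nat} {t : Trm B Con τ} {φ : Trm B Con .o}
    (env : Ty B × Nat → Nat) (w : Tm (SCon B Con))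
    (hw : (τ, m) ∈ FV φ → w = tr env t) :
    tr env (subst1 τ m t φ)
      = (tr (fun y => if y = (τ, m) then 0 else env y + 1) φ).bind (sub0 w) := by
  apply tr_substV
  intro y hy
  obtain ⟨y1, y2⟩ := y
  by_cases hym : (y1, y2) = (τ, m)
  · rw [if_pos hym]
    have h1 : y1 = τ := congrArg Prod.fst hym
    subst h1
    have h2 : y2 = m := congrArg Prod.snd hym
    subst h2
    show w = tr env (vupd vid y1 y2 t y1 y2)
    rw [vupd_self, hw hy]
  · rw [if_neg hym]
    show Tm.var (env (y1, y2)) = tr env (vupd vid τ m t y1 y2)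
    rw [vupd_ne _ _ _ _ hym]
    rfl

lemma FV_subst1_t {τ : Ty B} {m : Nat} {t : Trm B Con τ} {φ : Trm B Con .o}
    (h : (τ, m) ∈ FV φ) : FV t ⊆ FV (subst1 τ m t φ) := by
  have := FV_substV_mono φ (vupd vid τ m t) (τ, m) h
  rwa [show vupd vid τ m t (τ, m).1 (τ, m).2 = t from vupd_self _ _ _ _] at this

lemma FV_subst1_other {τ : Ty B} {m : Nat} {t : Trm B Con τ} {φ : Trm B Con .o}
    {y : Ty B × Nat} (hy : y ∈ FV φ) (hne : y ≠ (τ, m)) : y ∈ FV (subst1 τ m t φ) := by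
  have := FV_substV_mono φ (vupd vid τ m t) y hy
  rw [vupd_ne _ _ _ _ (by rw [Prod.mk.eta]; exact hne)] at this
  apply this
  show y ∈ FV (Trm.var y.1 y.2)
  simp [FV, vid]

end Embed

namespace Embed

open ICL PRED2

variable {B : Type} [DecidableEq B] {Con : PRED2.Ty B → Type}

/-- Abbreviation for derivability in `I₀` over the embedding signature. -/
abbrev ID (Γ : Set (Tm (SCon B Con))) (t : Tm (SCon B Con)) : Prop :=
  IDeriv (SCon.Xi : SCon B Con) SCon.L SCon.A false false Γ t

lemma Hbot {Γ : Set (Tm (SCon B Con))} (hcof : ((fvS Γ)ᶜ).Infinite) :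
    ID Γ (.app (Hc SCon.L) (botT SCon.Xi SCon.L)) := by
  obtain ⟨x, hx, -⟩ := exists_fresh hcof Set.finite_empty
  refine IDeriv.xiH x ?_ IDeriv.axLH hx (by simp [fvar_Hc]) ?_
  · refine IDeriv.eq (IDeriv.ax (Set.mem_insert _ _)) ?_
    exact Conv.appR _ (Conv.symm Conv.of_beta)
  · simp only [Tm.fvar, Set.mem_setOf_eq, Set.mem_singleton_iff]
    omega

/-- Canonical inhabitant of `A_τ`. -/
def cano : Ty B → (B → Nat) → Tm (SCon B Con)
  | .o, _ => botT SCon.Xi SCon.L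
  | .base b, ub => .var (ub b)
  | .arr _ τ, ub => Kt (cano τ ub)

lemma canoA {Γ : Set (Tm (SCon B Con))} (ub : B → Nat) (hcof : ((fvS Γ)ᶜ).Infinite)
    (hub : ∀ b, ID Γ (.app (.const (SCon.A b)) (.var (ub b)))) (τ : Ty B) :
    ID Γ (.app (Atm τ) (cano τ ub)) := by
  induction τ with
  | o => exact Hbot hcof
  | base b => exact hub b
  | arr b τ ih =>
      refine IDeriv.eq ?_ (Conv.symm (conv_Ft _ _ _ _))
      obtain ⟨x, hx1, hx2⟩ := exists_fresh hcof (Tm.fvar_finite (Nt (Atm τ) (Kt (cano τ ub))))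
      refine IDeriv.xiI x ?_ (IDeriv.axLA b) hx1 (by simp [Tm.fvar]) hx2
      refine IDeriv.eq (ih.wk (Set.subset_insert _ _) (cof_insert hcof _)) ?_
      refine Conv.symm ?_
      exact (conv_Nt_app _ _ _).trans (Conv.appR _ (conv_Kt_app _ _))

lemma elimA {Γ : Set (Tm (SCon B Con))} {τ : Ty B} {u : Nat} {t : Tm (SCon B Con)}
    (ub : B → Nat) (hcof : ((fvS Γ)ᶜ).Infinite)
    (hub : ∀ b, ID Γ (.app (.const (SCon.A b)) (.var (ub b))))
    (h : ID (insert (.app (Atm τ) (.var u)) Γ) t)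
    (hu1 : u ∉ fvS Γ) (hu2 : u ∉ t.fvar) : ID Γ t := by
  set W : Tm (SCon B Con) := cano τ ub with hW
  set σ : Nat → Tm (SCon B Con) := fun n => if n = u then W else .var n with hσ
  have h2 : ID (insert (.app (Atm τ) W) Γ) (t.bind σ) := by
    apply h.bindW σ _ ?_ (cof_insert hcof _)
    intro s hs
    rcases hs with rfl | hs
    · have he : (Tm.app (Atm τ) (.var u)).bind σ = .app (Atm τ) W := by
        simp [hσ, Atm_bind]
      rw [he]
      exact Set.mem_insert _ _
    · have he : s.bind σ = s :=
        Tm.bind_fvar_id (fun n hn => if_neg (by rintro rfl; exact hu1 (mem_fvS.2 ⟨s, hs, hn⟩)))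
      rw [he]
      exact Set.mem_insert_of_mem _ hs
  have h3 : t.bind σ = t :=
    Tm.bind_fvar_id (fun n hn => if_neg (by rintro rfl; exact hu2 hn))
  rw [h3] at h2
  exact h2.cut (canoA ub hcof hub τ) hcof

lemma cover (S : Finset (Ty B × Nat)) :
    ∀ (Γ : Set (Tm (SCon B Con))) (env : Ty B × Nat → Nat) (t : Tm (SCon B Con)),
      ((fvS Γ)ᶜ).Infinite →
      (∀ b, ∃ u, ID Γ (.app (.const (SCon.A b)) (.var u))) →
      (∀ (env2 : Ty B × Nat → Nat) (Γ2 : Set (Tm (SCon B Con))),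
          Γ ⊆ Γ2 → ((fvS Γ2)ᶜ).Infinite →
          (∀ b, ∃ u, ID Γ2 (.app (.const (SCon.A b)) (.var u))) →
          (∀ y, y ∉ S → env2 y = env y) →
          (∀ y ∈ S, ID Γ2 (.app (Atm y.1) (.var (env2 y)))) →
          ID Γ2 t) →
      ID Γ t := by
  induction S using Finset.induction_on with
  | empty =>
      intro Γ env t hcof hCy k
      exact k env Γ (le_refl _) hcof hCy (fun y _ => rfl) (fun y hy => absurd hy (by simp))
  | @insert y S' hyS ih =>
      intro Γ env t hcof hCy k
      obtain ⟨x, hx1, hx2⟩ := exists_fresh hcof (Tm.fvar_finite t)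
      set ub : B → Nat := fun b => Classical.choose (hCy b) with hub'
      have hub : ∀ b, ID Γ (.app (.const (SCon.A b)) (.var (ub b))) :=
        fun b => Classical.choose_spec (hCy b)
      have hmain : ID (insert (.app (Atm y.1) (.var x)) Γ) t := by
        apply ih (insert (.app (Atm y.1) (.var x)) Γ) (fun z => if z = y then x else env z) t
          (cof_insert hcof _)
          (fun b => ⟨ub b, (hub b).wk (Set.subset_insert _ _) (cof_insert hcof _)⟩)
        intro env2 Γ2 hsub2 hcof2 hCy2 henv2 hcov2
        apply k env2 Γ2 ((Set.subset_insert _ _).trans hsub2) hcof2 hCy2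
        · intro z hz
          rw [henv2 z (fun hc => hz (Finset.mem_insert_of_mem hc))]
          rw [if_neg (fun hc => hz (by rw [hc]; exact Finset.mem_insert_self _ _))]
        · intro z hz
          rcases Finset.mem_insert.1 hz with rfl | hz'
          · have he : env2 z = x := by
              rw [henv2 z hyS]
              simp
            rw [he]
            exact IDeriv.ax (hsub2 (Set.mem_insert _ _))
          · exact hcov2 z hz'
      exact elimA ub hcof hub hmain hx1 hx2

lemma HLem {τ : Ty B} (q : Trm B Con τ) :
    ∀ (env : Ty B × Nat → Nat) (Γ : Set (Tm (SCon B Con))),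
      ((fvS Γ)ᶜ).Infinite →
      (∀ y ∈ FV q, ID Γ (.app (Atm y.1) (.var (env y)))) →
      (∀ (τ'' : Ty B) (c : Con τ''), ID Γ (.app (Atm τ'') (.const (SCon.sig c)))) →
      ID Γ (.app (Atm τ) (tr env q)) := by
  induction q with
  | var τ k =>
      intro env Γ _ hv _
      exact hv (τ, k) (by simp [FV])
  | con c =>
      intro env Γ _ _ hc
      exact hc _ c
  | @app b τ f a ihf iha =>
      intro env Γ hcof hv hc
      have h1 := ihf env Γ hcof (fun y hy => hv y (by simp [FV, hy])) hc
      have h2 := iha env Γ hcof (fun y hy => hv y (by simp [FV, hy])) hc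
      have h3 : ID Γ (.app (.app (XiT (SCon.Xi : SCon B Con)) (.const (SCon.A b)))
          (Nt (Atm τ) (tr env f))) :=
        IDeriv.eq h1 (conv_Ft _ _ _ _)
      have h4 := IDeriv.xiE h3 h2
      exact IDeriv.eq h4 (conv_Nt_app _ _ _)
  | imp φ ψ ihφ ihψ =>
      intro env Γ hcof hv hc
      obtain ⟨x, hx1, hx2⟩ := exists_fresh hcof
        ((Tm.fvar_finite (Kt (tr env φ))).union (Tm.fvar_finite (Kt (tr env ψ))))
      have hφ := ihφ env Γ hcof (fun y hy => hv y (by simp [FV, hy])) hc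
      have hψx := ihψ env (insert (.app (Kt (tr env φ)) (.var x)) Γ) (cof_insert hcof _)
        (fun y hy => (hv y (by simp [FV, hy])).wk (Set.subset_insert _ _) (cof_insert hcof _))
        (fun τ'' c => (hc τ'' c).wk (Set.subset_insert _ _) (cof_insert hcof _))
      have hpre : ID (insert (.app (Kt (tr env φ)) (.var x)) Γ)
          (.app (Hc SCon.L) (.app (Kt (tr env ψ)) (.var x))) :=
        IDeriv.eq hψx (Conv.appR _ (Conv.symm (conv_Kt_app _ _)))
      have hmin : ID Γ (.app (LT SCon.L) (Kt (tr env φ))) := IDeriv.eq hφ (conv_H _ _)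
      have hfin := IDeriv.xiH x hpre hmin hx1
        (fun hc' => hx2 (Or.inl hc')) (fun hc' => hx2 (Or.inr hc'))
      exact IDeriv.eq hfin (Conv.appR _ (Conv.symm (conv_imp _ _ _)))
  | all τq hq m φ ih =>
      intro env Γ hcof hv hc
      obtain ⟨x, hx1, hx2⟩ := exists_fresh hcof
        (Tm.fvar_finite (.lam (tr (fun y => if y = (τq, m) then 0 else env y + 1) φ)))
      have hv2 : ∀ y ∈ FV φ, ID (insert (.app (Atm τq) (.var x)) Γ)
          (.app (Atm y.1) (.var (if y = (τq, m) then x else env y))) := by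
        intro y hy
        obtain ⟨y1, y2⟩ := y
        by_cases hym : (y1, y2) = (τq, m)
        · have e1 : y1 = τq := congrArg Prod.fst hym
          subst e1
          have e2 : y2 = m := congrArg Prod.snd hym
          subst e2
          rw [if_pos rfl]
          exact IDeriv.ax (Set.mem_insert _ _)
        · rw [if_neg hym]
          exact (hv (y1, y2) (by simp [FV, Finset.mem_erase, hym, hy])).wk
            (Set.subset_insert _ _) (cof_insert hcof _)
      have hinner := ih (fun y => if y = (τq, m) then x else env y)
        (insert (.app (Atm τq) (.var x)) Γ) (cof_insert hcof _) hv2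
        (fun τ'' c => (hc τ'' c).wk (Set.subset_insert _ _) (cof_insert hcof _))
      have hpre : ID (insert (.app (Atm τq) (.var x)) Γ)
          (.app (Hc SCon.L)
            (.app (.lam (tr (fun y => if y = (τq, m) then 0 else env y + 1) φ)) (.var x))) := by
        refine IDeriv.eq hinner (Conv.appR _ ?_)
        refine Conv.symm (Conv.trans Conv.of_beta ?_)
        rw [show (tr (fun y => if y = (τq, m) then 0 else env y + 1) φ).subst0 (.var x)
            = tr (fun y => if y = (τq, m) then x else env y) φ from ?_]
        · exact Conv.refl _
        · rw [Tm.subst0_eq_bind]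
          apply tr_bind
          intro y hy
          by_cases hym : y = (τq, m)
          · rw [if_pos hym, if_pos hym]
          · rw [if_neg hym, if_neg hym]
      have hmin : ID Γ (.app (LT SCon.L) (Atm τq)) := by
        rcases hq with h | ⟨b, h⟩
        · subst h
          exact IDeriv.axLH
        · subst h
          exact IDeriv.axLA b
      exact IDeriv.xiH x hpre hmin hx1 (by simp [fvar_Atm]) hx2

end Embed

namespace Embed

open ICL PRED2

variable {B : Type} [DecidableEq B] {Con : PRED2.Ty B → Type}

lemma mainInd {Δ' : Set (Trm B Con .o)} {χ : Trm B Con .o} (d : Deriv Δ' χ) :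
    ∀ (env : Ty B × Nat → Nat) (Γ : Set (Tm (SCon B Con))),
      ((fvS Γ)ᶜ).Infinite →
      (∀ ψ ∈ Δ', ID Γ (tr env ψ)) →
      (∀ y : Ty B × Nat, ((∃ ψ ∈ Δ', y ∈ FV ψ) ∨ y ∈ FV χ) →
        ID Γ (.app (Atm y.1) (.var (env y)))) →
      (∀ (τ'' : Ty B) (c : Con τ''), ID Γ (.app (Atm τ'') (.const (SCon.sig c)))) →
      (∀ b, ∃ u, ID Γ (.app (.const (SCon.A b)) (.var u))) →
      ID Γ (tr env χ) := by
  induction d with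
  | ax hmem =>
      intro env Γ _ h1 _ _ _
      exact h1 _ hmem
  | @impI Δ' φ ψ hd ih =>
      intro env Γ hcof h1 h2 h3 h4
      obtain ⟨x, hx1, hx2⟩ := exists_fresh hcof
        ((Tm.fvar_finite (Kt (tr env φ))).union (Tm.fvar_finite (Kt (tr env ψ))))
      have hpre0 : ID (insert (.app (Kt (tr env φ)) (.var x)) Γ) (tr env ψ) := by
        apply ih env _ (cof_insert hcof _) ?_ ?_
          (fun τ'' c => (h3 τ'' c).wk (Set.subset_insert _ _) (cof_insert hcof _))
          (fun b => (h4 b).imp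
            (fun u hu => hu.wk (Set.subset_insert _ _) (cof_insert hcof _)))
        · intro ψ' hψ'
          rcases hψ' with rfl | hψ'
          · exact IDeriv.eq (IDeriv.ax (Set.mem_insert _ _)) (conv_Kt_app _ _)
          · exact (h1 ψ' hψ').wk (Set.subset_insert _ _) (cof_insert hcof _)
        · intro y hy
          refine IDeriv.wk ?_ (Set.subset_insert _ _) (cof_insert hcof _)
          apply h2 y
          rcases hy with ⟨ψ', hψ', hyψ'⟩ | hy
          · rcases hψ' with rfl | hψ'
            · exact Or.inr (by simp [FV, hyψ'])
            · exact Or.inl ⟨ψ', hψ', hyψ'⟩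
          · exact Or.inr (by simp [FV, hy])
      have hpre : ID (insert (.app (Kt (tr env φ)) (.var x)) Γ)
          (.app (Kt (tr env ψ)) (.var x)) :=
        IDeriv.eq hpre0 (Conv.symm (conv_Kt_app _ _))
      have hH := HLem φ env Γ hcof (fun y hy => h2 y (Or.inr (by simp [FV, hy]))) h3
      have hmin : ID Γ (.app (LT SCon.L) (Kt (tr env φ))) := IDeriv.eq hH (conv_H _ _)
      have hfin := IDeriv.xiI x hpre hmin hx1
        (fun hc => hx2 (Or.inl hc)) (fun hc => hx2 (Or.inr hc))
      exact IDeriv.eq hfin (Conv.symm (conv_imp _ _ _))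
  | @impE Δ' φ ψ hd1 hd2 ih1 ih2 =>
      intro env Γ hcof h1 h2 h3 h4
      classical
      set S : Finset (Ty B × Nat) :=
        (FV φ).filter (fun y => ¬((∃ ψ' ∈ Δ', y ∈ FV ψ') ∨ y ∈ FV ψ)) with hS
      apply cover S Γ env (tr env ψ) hcof h4
      intro env2 Γ2 hsub2 hcof2 hCy2 henv2 hcov2
      have hC2 : ∀ y : Ty B × Nat, ((∃ ψ' ∈ Δ', y ∈ FV ψ') ∨ (y ∈ FV φ ∨ y ∈ FV ψ)) →
          ID Γ2 (.app (Atm y.1) (.var (env2 y))) := by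
        intro y hy
        by_cases hyS : y ∈ S
        · exact hcov2 y hyS
        · have hcovd : (∃ ψ' ∈ Δ', y ∈ FV ψ') ∨ y ∈ FV ψ := by
            rcases hy with hy | hy | hy
            · exact Or.inl hy
            · by_contra hcon
              exact hyS (by rw [hS]; exact Finset.mem_filter.2 ⟨hy, hcon⟩)
            · exact Or.inr hy
          rw [henv2 y hyS]
          refine IDeriv.wk ?_ hsub2 hcof2
          apply h2 y
          rcases hcovd with h | h
          · exact Or.inl h
          · exact Or.inr h
      have hC1 : ∀ ψ' ∈ Δ', ID Γ2 (tr env2 ψ') := by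
        intro ψ' hψ'
        have he : tr env2 ψ' = tr env ψ' := by
          apply tr_congr
          intro y hy
          apply henv2
          intro hyS
          rw [hS] at hyS
          exact (Finset.mem_filter.1 hyS).2 (Or.inl ⟨ψ', hψ', hy⟩)
        rw [he]
        exact (h1 ψ' hψ').wk hsub2 hcof2
      have hC3 : ∀ (τ'' : Ty B) (c : Con τ''), ID Γ2 (.app (Atm τ'') (.const (SCon.sig c))) :=
        fun τ'' c => (h3 τ'' c).wk hsub2 hcof2
      have hImp := ih1 env2 Γ2 hcof2 hC1
        (fun y hy => hC2 y (by
          rcases hy with hy | hy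
          · exact Or.inl hy
          · simp only [FV, Finset.mem_union] at hy
            exact Or.inr hy)) hC3 hCy2
      have hA := ih2 env2 Γ2 hcof2 hC1
        (fun y hy => hC2 y (by
          rcases hy with hy | hy
          · exact Or.inl hy
          · exact Or.inr (Or.inl hy))) hC3 hCy2
      have h5 : ID Γ2 (.app (.app (XiT (SCon.Xi : SCon B Con)) (Kt (tr env2 φ)))
          (Kt (tr env2 ψ))) :=
        IDeriv.eq hImp (conv_imp _ _ _)
      have h6 : ID Γ2 (.app (Kt (tr env2 φ)) (.var 0)) :=
        IDeriv.eq hA (Conv.symm (conv_Kt_app _ _))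
      have h7 := IDeriv.xiE h5 h6
      have h8 := IDeriv.eq h7 (conv_Kt_app _ _)
      have he : tr env2 ψ = tr env ψ := by
        apply tr_congr
        intro y hy
        apply henv2
        intro hyS
        rw [hS] at hyS
        exact (Finset.mem_filter.1 hyS).2 (Or.inr hy)
      rwa [he] at h8
  | @allI Δ' τq hτ m φ hd hside ih =>
      intro env Γ hcof h1 h2 h3 h4
      obtain ⟨x, hx1, hx2⟩ := exists_fresh hcof
        (Tm.fvar_finite (.lam (tr (fun y => if y = (τq, m) then 0 else env y + 1) φ)))
      have hin : ID (insert (.app (Atm τq) (.var x)) Γ)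
          (tr (fun y => if y = (τq, m) then x else env y) φ) := by
        apply ih _ _ (cof_insert hcof _) ?_ ?_
          (fun τ'' c => (h3 τ'' c).wk (Set.subset_insert _ _) (cof_insert hcof _))
          (fun b => (h4 b).imp
            (fun u hu => hu.wk (Set.subset_insert _ _) (cof_insert hcof _)))
        · intro ψ hψ
          have he : tr (fun y => if y = (τq, m) then x else env y) ψ = tr env ψ := by
            apply tr_congr
            intro y hy
            rw [if_neg (fun hc => hside ψ hψ (by rw [← hc]; exact hy))]
          rw [he]
          exact (h1 ψ hψ).wk (Set.subset_insert _ _) (cof_insert hcof _)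
        · intro y hy
          obtain ⟨y1, y2⟩ := y
          by_cases hym : (y1, y2) = (τq, m)
          · have e1 : y1 = τq := congrArg Prod.fst hym
            subst e1
            have e2 : y2 = m := congrArg Prod.snd hym
            subst e2
            rw [if_pos rfl]
            exact IDeriv.ax (Set.mem_insert _ _)
          · rw [if_neg hym]
            refine IDeriv.wk ?_ (Set.subset_insert _ _) (cof_insert hcof _)
            apply h2 (y1, y2)
            rcases hy with ⟨ψ', hψ', hyψ'⟩ | hy
            · exact Or.inl ⟨ψ', hψ', hyψ'⟩
            · exact Or.inr (by simp [FV, Finset.mem_erase, hym, hy])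
      have hpre : ID (insert (.app (Atm τq) (.var x)) Γ)
          (.app (.lam (tr (fun y => if y = (τq, m) then 0 else env y + 1) φ)) (.var x)) := by
        refine IDeriv.eq hin ?_
        refine Conv.symm (Conv.trans Conv.of_beta ?_)
        rw [show (tr (fun y => if y = (τq, m) then 0 else env y + 1) φ).subst0 (.var x)
            = tr (fun y => if y = (τq, m) then x else env y) φ from ?_]
        · exact Conv.refl _
        · rw [Tm.subst0_eq_bind]
          apply tr_bind
          intro y hy
          by_cases hym : y = (τq, m)
          · rw [if_pos hym, if_pos hym]
          · rw [if_neg hym, if_neg hym]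
      have hmin : ID Γ (.app (LT SCon.L) (Atm τq)) := by
        rcases hτ with h | ⟨b, h⟩
        · subst h
          exact IDeriv.axLH
        · subst h
          exact IDeriv.axLA b
      exact IDeriv.xiI x hpre hmin hx1 (by simp [fvar_Atm]) hx2
  | @allE Δ' τq hτ m φ t hd ih =>
      intro env Γ hcof h1 h2 h3 h4
      have hXi : ID Γ (.app (.app (XiT (SCon.Xi : SCon B Con)) (Atm τq))
          (.lam (tr (fun y => if y = (τq, m) then 0 else env y + 1) φ))) := by
        apply ih env Γ hcof h1 ?_ h3 h4
        intro y hy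
        apply h2 y
        rcases hy with hy | hy
        · exact Or.inl hy
        · simp only [FV, Finset.mem_erase] at hy
          exact Or.inr (FV_subst1_other hy.2 hy.1)
      by_cases hmem : (τq, m) ∈ FV φ
      · have hmin : ID Γ (.app (Atm τq) (tr env t)) :=
          HLem t env Γ hcof (fun y hy => h2 y (Or.inr (FV_subst1_t hmem hy))) h3
        have h5 := IDeriv.xiE hXi hmin
        refine IDeriv.eq h5 (Conv.trans Conv.of_beta ?_)
        rw [show (tr (fun y => if y = (τq, m) then 0 else env y + 1) φ).subst0 (tr env t)
            = tr env (subst1 τq m t φ) from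
          (tr_subst1 (t := t) env (tr env t) (fun _ => rfl)).symm]
        exact Conv.refl _
      · rcases hτ with h | ⟨b, h⟩
        · subst h
          have hmin : ID Γ (.app (Atm Ty.o) (botT SCon.Xi SCon.L)) := Hbot hcof
          have h5 := IDeriv.xiE hXi hmin
          refine IDeriv.eq h5 (Conv.trans Conv.of_beta ?_)
          rw [show (tr (fun y => if y = (Ty.o, m) then 0 else env y + 1) φ).subst0
                (botT SCon.Xi SCon.L)
              = tr env (subst1 Ty.o m t φ) from
            (tr_subst1 (t := t) env (botT SCon.Xi SCon.L)
              (fun hmem' => absurd hmem' hmem)).symm]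
          exact Conv.refl _
        · subst h
          obtain ⟨u, hu⟩ := h4 b
          have hmin : ID Γ (.app (Atm (Ty.base b)) (.var u)) := hu
          have h5 := IDeriv.xiE hXi hmin
          refine IDeriv.eq h5 (Conv.trans Conv.of_beta ?_)
          rw [show (tr (fun y => if y = (Ty.base b, m) then 0 else env y + 1) φ).subst0
                (.var u)
              = tr env (subst1 (Ty.base b) m t φ) from
            (tr_subst1 (t := t) env (.var u) (fun hmem' => absurd hmem' hmem)).symm]
          exact Conv.refl _

end Embed

namespace Embed
open ICL PRED2

/-- **Soundness of the embedding of PRED2₀ into I₀ (Theorem 5.3).**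
If `Δ ⊢ φ` in PRED2₀ then `⟦Δ⟧ ∪ Γ(Δ ∪ {φ}) ⊢ ⟦φ⟧` in `I₀`.
(`env` is an injective assignment of illative variables to PRED2₀ variables, and
`yc` chooses, for each base type, a variable fresh for `Δ ∪ {φ}`.) -/
theorem embedding_sound {B : Type} [DecidableEq B] [Finite B]
    {Con : PRED2.Ty B → Type} [∀ τ : PRED2.Ty B, Countable (Con τ)]
    (env : PRED2.Ty B × Nat → Nat) (henv : Function.Injective env)
    (Δ : Set (Trm B Con .o)) (φ : Trm B Con .o)
    (yc : B → Nat) (hyc : ∀ b : B, ∀ ψ ∈ insert φ Δ, (PRED2.Ty.base b, yc b) ∉ FV ψ)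
    (hd : DerivFrom Δ φ) :
    IDerivFrom (((fun ψ : Trm B Con .o => tr env ψ) '' Δ) ∪ GammaSet env (insert φ Δ) yc)
      (tr env φ) := by
  obtain ⟨Δ', hΔsub, hΔfin, hd⟩ := hd
  classical
  set Γtop : Set (Tm (SCon B Con)) :=
    ((fun ψ : Trm B Con .o => tr env ψ) '' Δ') ∪
    {t | ∃ y : PRED2.Ty B × Nat, ((∃ ψ ∈ Δ', y ∈ FV ψ) ∨ y ∈ FV φ) ∧
        t = .app (Atm y.1) (.var (env y))} ∪
    {t | ∃ (τ : PRED2.Ty B) (c : Con τ), t = .app (Atm τ) (.const (SCon.sig c))} ∪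
    {t | ∃ b : B, t = .app (Atm (PRED2.Ty.base b)) (.var (env (PRED2.Ty.base b, yc b)))}
    with hΓtop
  have hcof : ((fvS Γtop)ᶜ).Infinite := by
    have hfin : (fvS Γtop).Finite := by
      have hbound : fvS Γtop ⊆
          (⋃ ψ ∈ Δ', (env '' (FV ψ : Set (PRED2.Ty B × Nat)))) ∪
          (env '' (FV φ : Set (PRED2.Ty B × Nat))) ∪
          Set.range (fun b : B => env (PRED2.Ty.base b, yc b)) := by
        intro n hn
        obtain ⟨s, hs, hns⟩ := mem_fvS.1 hn
        rcases hs with ((⟨ψ, hψ, rfl⟩ | ⟨y, hy, rfl⟩) | ⟨τ, c, rfl⟩) | ⟨b, rfl⟩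
        · obtain ⟨y, hy, rfl⟩ := mem_fvar_tr.1 hns
          exact Or.inl (Or.inl (Set.mem_biUnion hψ ⟨y, by simpa using hy, rfl⟩))
        · simp only [Tm.fvar, Set.mem_union, fvar_Atm, Set.mem_empty_iff_false, false_or,
            Set.mem_singleton_iff] at hns
          subst hns
          rcases hy with ⟨ψ, hψ, hyψ⟩ | hy
          · exact Or.inl (Or.inl (Set.mem_biUnion hψ ⟨y, by simpa using hyψ, rfl⟩))
          · exact Or.inl (Or.inr ⟨y, by simpa using hy, rfl⟩)
        · simp only [Tm.fvar, Set.mem_union, fvar_Atm, Set.mem_empty_iff_false, or_self]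
            at hns
        · simp only [Tm.fvar, Set.mem_union, fvar_Atm, Set.mem_empty_iff_false, false_or,
            Set.mem_singleton_iff] at hns
          subst hns
          exact Or.inr ⟨b, rfl⟩
      refine Set.Finite.subset ?_ hbound
      refine Set.Finite.union (Set.Finite.union ?_ ?_) ?_
      · exact Set.Finite.biUnion hΔfin (fun ψ _ => (FV ψ).finite_toSet.image env)
      · exact (FV φ).finite_toSet.image env
      · exact Set.finite_range _
    exact hfin.infinite_compl
  have hres : ID Γtop (tr env φ) := by
    apply mainInd hd env Γtop hcof
    · intro ψ hψ
      exact IDeriv.ax (Or.inl (Or.inl (Or.inl ⟨ψ, hψ, rfl⟩)))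
    · intro y hy
      exact IDeriv.ax (Or.inl (Or.inl (Or.inr ⟨y, hy, rfl⟩)))
    · intro τ c
      exact IDeriv.ax (Or.inl (Or.inr ⟨τ, c, rfl⟩))
    · intro b
      exact ⟨env (PRED2.Ty.base b, yc b), IDeriv.ax (Or.inr ⟨b, rfl⟩)⟩
  obtain ⟨Γ'', hsub'', hfin'', hder''⟩ := hres.compact
  refine ⟨Γ'', hsub''.trans ?_, hfin'', hder''⟩
  intro s hs
  rcases hs with ((⟨ψ, hψ, rfl⟩ | ⟨y, hy, rfl⟩) | ⟨τ, c, rfl⟩) | ⟨b, rfl⟩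
  · exact Or.inl ⟨ψ, hΔsub hψ, rfl⟩
  · refine Or.inr (Or.inl (Or.inl (Or.inl ⟨y.1, y.2, ?_, rfl⟩)))
    rcases hy with ⟨ψ, hψ, hyψ⟩ | hy
    · exact ⟨ψ, Set.mem_insert_of_mem _ (hΔsub hψ), hyψ⟩
    · exact ⟨φ, Set.mem_insert _ _, hy⟩
  · exact Or.inr (Or.inl (Or.inl (Or.inr ⟨τ, c, rfl⟩)))
  · exact Or.inr (Or.inr ⟨b, rfl⟩)

end Embed
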